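/- arXiv:1907.10771 — 4 statements merged into one kernel-verified Lean document; each statement's English description precedes it below -/
import Mathlib

section
/- Let G be a finite simple T-regular graph (T ≥ 1) on n ≥ 2 vertices with normalized adjacency matrix A(G), and let H ≥ 1 be an integer. Set D₀ = T·2^H − (T−1) and define the n×n matrix Ã = ((1 + T·(2^{H−1} − 1))/D₀)·I + (T·2^{H−1}/D₀)·A(G), which is symmetric and row-stochastic. Then for every symmetric row-stochastic m×m matrix B with m ≥ 2, TwoSidedGap(Ã ⊗ B) ≥ min{ (T·2^{H−1}/(T·2^H − (T−1)))·TwoSidedGap(A(G)), TwoSidedGap(B) }. (This is the global-expansion bound for the local densifier construction, whose 1-skeleton has adjacency matrix Ã ⊗ B where B is the normalized adjacency matrix of the 1-skeleton of the base complex.) -/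
open Matrix Finset BigOperators Kronecker

noncomputable def eigs {α : Type*} [Fintype α] [DecidableEq α] (M : Matrix α α ℝ) : Multiset ℝ :=
  M.charpoly.roots

noncomputable def sortedEigs {α : Type*} [Fintype α] [DecidableEq α] (M : Matrix α α ℝ) : List ℝ :=
  (eigs M).sort (· ≤ ·)

noncomputable def secondEig {α : Type*} [Fintype α] [DecidableEq α] (M : Matrix α α ℝ) : ℝ :=
  (sortedEigs M).getD (Fintype.card α - 2) 0

noncomputable def minEig {α : Type*} [Fintype α] [DecidableEq α] (M : Matrix α α ℝ) : ℝ :=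
  (sortedEigs M).getD 0 0

noncomputable def oneSidedGap {α : Type*} [Fintype α] [DecidableEq α] (M : Matrix α α ℝ) : ℝ :=
  1 - secondEig M

noncomputable def twoSidedGap {α : Type*} [Fintype α] [DecidableEq α] (M : Matrix α α ℝ) : ℝ :=
  1 - max |secondEig M| |minEig M|

def RowStochastic {α : Type*} [Fintype α] (M : Matrix α α ℝ) : Prop :=
  (∀ i j, 0 ≤ M i j) ∧ ∀ i, ∑ j, M i j = 1

/-- Normalized adjacency matrix of a graph, with normalization 1/T. -/
noncomputable def normAdj {V : Type*} [Fintype V] (G : SimpleGraph V) [DecidableRel G.Adj] (T : ℕ) :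
    Matrix V V ℝ :=
  fun u v => if G.Adj u v then 1 / (T : ℝ) else 0

section Aux

open Polynomial

lemma charpoly_conj {α : Type*} [Fintype α] [DecidableEq α] (P M Q : Matrix α α ℝ)
    (hPQ : P * Q = 1) : (P * M * Q).charpoly = M.charpoly := by
  have hmap : ∀ (N : Matrix α α ℝ), (C : ℝ →+* ℝ[X]).mapMatrix N = N.map C := fun _ => rfl
  have key : charmatrix (P * M * Q) = (P.map C) * charmatrix M * (Q.map C) := by
    rw [charmatrix, charmatrix, hmap, hmap]
    have h1 : (P.map C) * (Matrix.scalar α (X : ℝ[X])) * (Q.map C)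
        = Matrix.scalar α (X : ℝ[X]) := by
      rw [← Matrix.scalar_commute (X : ℝ[X]) (fun r => (Commute.all _ _)) (P.map C)]
      rw [mul_assoc, ← Matrix.map_mul, hPQ]
      simp [Matrix.scalar]
    rw [mul_sub, sub_mul, h1, ← Matrix.map_mul, ← Matrix.map_mul]
  rw [Matrix.charpoly, Matrix.charpoly, key, det_mul, det_mul]
  have : (P.map C).det * (Q.map C).det = 1 := by
    rw [← det_mul, ← Matrix.map_mul, hPQ]; simp
  calc (P.map C).det * (charmatrix M).det * (Q.map C).det
      = (charmatrix M).det * ((P.map C).det * (Q.map C).det) := by ring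
    _ = (charmatrix M).det := by rw [this, mul_one]

lemma charpoly_diagonal {α : Type*} [Fintype α] [DecidableEq α] (d : α → ℝ) :
    (Matrix.diagonal d).charpoly = ∏ i, (X - C (d i)) := by
  rw [Matrix.charpoly]
  have : charmatrix (Matrix.diagonal d) = Matrix.diagonal (fun i => X - C (d i)) := by
    ext i j
    rcases eq_or_ne i j with rfl | h
    · simp
    · simp [charmatrix_apply_ne _ _ _ h, Matrix.diagonal_apply_ne _ h]
  rw [this, Matrix.det_diagonal]

lemma eigs_diagonal {α : Type*} [Fintype α] [DecidableEq α] (d : α → ℝ) :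
    eigs (Matrix.diagonal d) = Multiset.map d Finset.univ.val := by
  rw [eigs, _root_.charpoly_diagonal]
  rw [Finset.prod_eq_multiset_prod]
  have : Multiset.map (fun i => X - C (d i)) univ.val
      = Multiset.map (fun a => X - C a) (Multiset.map d univ.val) := by
    rw [Multiset.map_map]; rfl
  rw [this]
  exact Polynomial.roots_multiset_prod_X_sub_C _

lemma eigs_hermitian {α : Type*} [Fintype α] [DecidableEq α] {M : Matrix α α ℝ}
    (hM : M.IsHermitian) : eigs M = Multiset.map hM.eigenvalues Finset.univ.val := by
  set U := (Matrix.IsHermitian.eigenvectorUnitary hM : Matrix α α ℝ) with hUdef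
  have hPQ : U * star U = 1 :=
    Matrix.mem_unitaryGroup_iff.mp (Matrix.IsHermitian.eigenvectorUnitary hM).2
  have hofReal : (RCLike.ofReal ∘ hM.eigenvalues : α → ℝ) = hM.eigenvalues := by
    funext x; simp
  have := hM.spectral_theorem
  rw [hofReal, Unitary.conjStarAlgAut_apply] at this
  calc eigs M = eigs (U * Matrix.diagonal hM.eigenvalues * star U) := by rw [← this]
    _ = (Matrix.diagonal hM.eigenvalues).charpoly.roots := by
        rw [eigs, charpoly_conj _ _ _ hPQ]
    _ = Multiset.map hM.eigenvalues Finset.univ.val := eigs_diagonal _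

lemma card_eigs_hermitian {α : Type*} [Fintype α] [DecidableEq α] {M : Matrix α α ℝ}
    (hM : M.IsHermitian) : Multiset.card (eigs M) = Fintype.card α := by
  rw [eigs_hermitian hM, Multiset.card_map]
  rfl

lemma eigs_kronecker {α β : Type*} [Fintype α] [DecidableEq α] [Fintype β] [DecidableEq β]
    {M : Matrix α α ℝ} {N : Matrix β β ℝ} (hM : M.IsHermitian) (hN : N.IsHermitian) :
    eigs (M ⊗ₖ N) = (eigs M).bind (fun a => (eigs N).map (fun b => a * b)) := by
  set U := (Matrix.IsHermitian.eigenvectorUnitary hM : Matrix α α ℝ)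
  set V := (Matrix.IsHermitian.eigenvectorUnitary hN : Matrix β β ℝ)
  have hU : U * star U = 1 :=
    Matrix.mem_unitaryGroup_iff.mp (Matrix.IsHermitian.eigenvectorUnitary hM).2
  have hV : V * star V = 1 :=
    Matrix.mem_unitaryGroup_iff.mp (Matrix.IsHermitian.eigenvectorUnitary hN).2
  have hofM : (RCLike.ofReal ∘ hM.eigenvalues : α → ℝ) = hM.eigenvalues := by funext x; simp
  have hofN : (RCLike.ofReal ∘ hN.eigenvalues : β → ℝ) = hN.eigenvalues := by funext x; simp
  have hMeq := hM.spectral_theorem; rw [hofM, Unitary.conjStarAlgAut_apply] at hMeq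
  have hNeq := hN.spectral_theorem; rw [hofN, Unitary.conjStarAlgAut_apply] at hNeq
  have key : M ⊗ₖ N = (U ⊗ₖ V)
      * (Matrix.diagonal (fun p : α × β => hM.eigenvalues p.1 * hN.eigenvalues p.2))
      * ((star U) ⊗ₖ (star V)) := by
    conv_lhs => rw [hMeq, hNeq]
    rw [← Matrix.diagonal_kronecker_diagonal, ← Matrix.mul_kronecker_mul,
      ← Matrix.mul_kronecker_mul]
  have hPQ : (U ⊗ₖ V) * ((star U) ⊗ₖ (star V)) = 1 := by
    rw [← Matrix.mul_kronecker_mul, hU, hV, Matrix.one_kronecker_one]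
  rw [key, eigs, charpoly_conj _ _ _ hPQ, ← eigs, eigs_diagonal]
  rw [eigs_hermitian hM, eigs_hermitian hN]
  have : (Finset.univ : Finset (α × β)).val
      = (Finset.univ : Finset α).val ×ˢ (Finset.univ : Finset β).val := by
    rw [← Finset.univ_product_univ]; rfl
  rw [this]
  show Multiset.map _ (Multiset.product _ _) = _
  rw [Multiset.product]
  simp [Multiset.map_bind, Multiset.map_map, Multiset.bind_map, Function.comp]

lemma eigs_affine {α : Type*} [Fintype α] [DecidableEq α] {M : Matrix α α ℝ}
    (hM : M.IsHermitian) (a b : ℝ) :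
    eigs (a • (1 : Matrix α α ℝ) + b • M) = (eigs M).map (fun x => a + b * x) := by
  set U := (Matrix.IsHermitian.eigenvectorUnitary hM : Matrix α α ℝ)
  have hU : U * star U = 1 :=
    Matrix.mem_unitaryGroup_iff.mp (Matrix.IsHermitian.eigenvectorUnitary hM).2
  have hofM : (RCLike.ofReal ∘ hM.eigenvalues : α → ℝ) = hM.eigenvalues := by funext x; simp
  have hMeq := hM.spectral_theorem; rw [hofM, Unitary.conjStarAlgAut_apply] at hMeq
  have key : a • (1 : Matrix α α ℝ) + b • M
      = U * Matrix.diagonal (fun i => a + b * hM.eigenvalues i) * star U := by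
    have hdiag : Matrix.diagonal (fun i => a + b * hM.eigenvalues i)
        = a • (1 : Matrix α α ℝ) + b • Matrix.diagonal hM.eigenvalues := by
      ext i j
      rcases eq_or_ne i j with rfl | h
      · simp
      · simp [Matrix.diagonal_apply_ne _ h, Matrix.one_apply_ne h]
    rw [hdiag, Matrix.mul_add, Matrix.add_mul, Matrix.mul_smul, Matrix.smul_mul,
      Matrix.mul_smul, Matrix.smul_mul, mul_one, hU, ← hMeq]
  rw [key, eigs, charpoly_conj _ _ _ hU, ← eigs, eigs_diagonal, eigs_hermitian hM,
    Multiset.map_map]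
  rfl

lemma eval_charpoly' {α : Type*} [Fintype α] [DecidableEq α] (M : Matrix α α ℝ) (t : ℝ) :
    M.charpoly.eval t = (t • (1 : Matrix α α ℝ) - M).det := by
  rw [Matrix.charpoly, ← Polynomial.coe_evalRingHom, RingHom.map_det]
  congr 1
  ext i j
  rcases eq_or_ne i j with rfl | h
  · simp [Matrix.one_apply]
  · simp [charmatrix_apply_ne _ _ _ h, Matrix.one_apply_ne h]

lemma mem_eigs_iff {α : Type*} [Fintype α] [DecidableEq α] [Nonempty α]
    {M : Matrix α α ℝ} {x : ℝ} : x ∈ eigs M ↔ (x • (1 : Matrix α α ℝ) - M).det = 0 := by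
  rw [eigs, Polynomial.mem_roots (M.charpoly_monic.ne_zero), Polynomial.IsRoot,
    eval_charpoly']

lemma one_mem_eigs {α : Type*} [Fintype α] [DecidableEq α] [Nonempty α]
    {M : Matrix α α ℝ} (hrs : RowStochastic M) : (1 : ℝ) ∈ eigs M := by
  rw [mem_eigs_iff]
  rw [← Matrix.exists_mulVec_eq_zero_iff]
  refine ⟨fun _ => 1, ?_, ?_⟩
  · intro h
    have := congrFun h (Classical.arbitrary α)
    simp at this
  · funext i
    simp [Matrix.mulVec, dotProduct, Matrix.sub_apply, sub_mul, Finset.sum_sub_distrib,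
      Matrix.smul_apply, Matrix.one_apply, hrs.2 i]

lemma abs_le_one_of_mem_eigs {α : Type*} [Fintype α] [DecidableEq α] [Nonempty α]
    {M : Matrix α α ℝ} (hrs : RowStochastic M) {x : ℝ} (hx : x ∈ eigs M) : |x| ≤ 1 := by
  rw [mem_eigs_iff, ← Matrix.exists_mulVec_eq_zero_iff] at hx
  obtain ⟨v, hv, hveq⟩ := hx
  have hMv : ∀ i, x * v i = ∑ j, M i j * v j := by
    intro i
    have := congrFun hveq i
    simp [Matrix.mulVec, dotProduct, Matrix.sub_apply, sub_mul, Finset.sum_sub_distrib,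
      Matrix.smul_apply, Matrix.one_apply, Finset.sum_ite_eq'] at this
    linarith [this]
  obtain ⟨i, -, hi⟩ := Finset.exists_max_image Finset.univ (fun j => |v j|)
    ⟨Classical.arbitrary α, Finset.mem_univ _⟩
  have hipos : 0 < |v i| := by
    obtain ⟨j, hj⟩ : ∃ j, v j ≠ 0 := by
      by_contra h
      push_neg at h
      exact hv (funext h)
    exact lt_of_lt_of_le (abs_pos.mpr hj) (hi j (Finset.mem_univ j))
  have hbound : |x| * |v i| ≤ 1 * |v i| := by
    rw [← abs_mul, hMv i, one_mul]
    calc |∑ j, M i j * v j| ≤ ∑ j, |M i j * v j| := Finset.abs_sum_le_sum_abs _ _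
      _ = ∑ j, M i j * |v j| := by
          refine Finset.sum_congr rfl fun j _ => ?_
          rw [abs_mul, abs_of_nonneg (hrs.1 i j)]
      _ ≤ ∑ j, M i j * |v i| := by
          refine Finset.sum_le_sum fun j _ => ?_
          exact mul_le_mul_of_nonneg_left (hi j (Finset.mem_univ j)) (hrs.1 i j)
      _ = |v i| := by rw [← Finset.sum_mul, hrs.2 i, one_mul]
  exact le_of_mul_le_mul_right hbound hipos

lemma sort_eq_append {s : Multiset ℝ} (h1 : (1:ℝ) ∈ s) (hle : ∀ x ∈ s, x ≤ 1) :
    s.sort (· ≤ ·) = (s.erase 1).sort (· ≤ ·) ++ [1] := by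
  have hperm : List.Perm (s.sort (· ≤ ·)) ((s.erase 1).sort (· ≤ ·) ++ [1]) := by
    rw [← Multiset.coe_eq_coe]
    rw [show (((s.erase 1).sort (· ≤ ·) ++ [1] : List ℝ) : Multiset ℝ)
        = ((s.erase 1).sort (· ≤ ·) : Multiset ℝ) + (([1] : List ℝ) : Multiset ℝ) from rfl]
    rw [Multiset.sort_eq, Multiset.sort_eq]
    rw [show (([1] : List ℝ) : Multiset ℝ) = {1} from rfl]
    rw [add_comm, Multiset.singleton_add]
    exact (Multiset.cons_erase h1).symm
  have hsorted : ((s.erase 1).sort (· ≤ ·) ++ [1]).Pairwise (· ≤ ·) := by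
    rw [List.pairwise_append]
    refine ⟨Multiset.pairwise_sort _ _, List.pairwise_singleton _ _, ?_⟩
    intro x hx y hy
    rw [List.mem_singleton] at hy
    subst hy
    exact hle x (Multiset.mem_of_mem_erase ((Multiset.mem_sort _).mp hx))
  exact List.Perm.eq_of_pairwise' (Multiset.pairwise_sort _ _) hsorted hperm

lemma getD_sort_mem_erase {s : Multiset ℝ} {N k : ℕ} (hcard : Multiset.card s = N)
    (h1 : (1:ℝ) ∈ s) (hle : ∀ x ∈ s, x ≤ 1) (hk : k < N - 1) :
    (s.sort (· ≤ ·)).getD k 0 ∈ s.erase 1 := by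
  rw [sort_eq_append h1 hle]
  have hlen : ((s.erase 1).sort (· ≤ ·)).length = N - 1 := by
    rw [Multiset.length_sort, Multiset.card_erase_of_mem h1, hcard]
    rfl
  rw [List.getD_append _ _ _ _ (by rw [hlen]; exact hk)]
  rw [List.getD_eq_getElem _ _ (by rw [hlen]; exact hk)]
  exact (Multiset.mem_sort _).mp (List.getElem_mem _)

lemma le_getD_sorted {l : List ℝ} (hl : l.Pairwise (· ≤ ·)) {x : ℝ} (hx : x ∈ l) :
    l.getD 0 0 ≤ x ∧ x ≤ l.getD (l.length - 1) 0 := by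
  obtain ⟨⟨k, hk⟩, rfl⟩ := List.mem_iff_get.mp hx
  have hlen : 0 < l.length := lt_of_le_of_lt (Nat.zero_le _) hk
  constructor
  · rw [List.getD_eq_getElem _ _ hlen]
    exact hl.rel_get_of_le (a := ⟨0, hlen⟩) (b := ⟨k, hk⟩) (by simp)
  · rw [List.getD_eq_getElem _ _ (Nat.sub_lt hlen one_pos)]
    exact hl.rel_get_of_le (a := ⟨k, hk⟩) (b := ⟨l.length - 1, _⟩)
      (by simp [Nat.le_sub_one_of_lt hk])

lemma spec_master {s : Multiset ℝ} {N : ℕ} (hcard : Multiset.card s = N) (hN : 2 ≤ N)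
    (h1 : (1:ℝ) ∈ s) (hle : ∀ x ∈ s, |x| ≤ 1) :
    max |(s.sort (· ≤ ·)).getD (N-2) 0| |(s.sort (· ≤ ·)).getD 0 0| ≤ 1 ∧
    (∀ x ∈ s.erase 1, |x| ≤ max |(s.sort (· ≤ ·)).getD (N-2) 0| |(s.sort (· ≤ ·)).getD 0 0|) ∧
    (∀ C : ℝ, (∀ x ∈ s.erase 1, |x| ≤ C) →
      max |(s.sort (· ≤ ·)).getD (N-2) 0| |(s.sort (· ≤ ·)).getD 0 0| ≤ C) := by
  have hle' : ∀ x ∈ s, x ≤ 1 := fun x hx => le_trans (le_abs_self x) (hle x hx)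
  have hsec_mem : (s.sort (· ≤ ·)).getD (N-2) 0 ∈ s.erase 1 :=
    getD_sort_mem_erase hcard h1 hle' (by omega)
  have hmn_mem : (s.sort (· ≤ ·)).getD 0 0 ∈ s.erase 1 :=
    getD_sort_mem_erase hcard h1 hle' (by omega)
  set sec := (s.sort (· ≤ ·)).getD (N-2) 0 with hsec
  set mn := (s.sort (· ≤ ·)).getD 0 0 with hmn
  have hlen : ((s.erase 1).sort (· ≤ ·)).length = N - 1 := by
    rw [Multiset.length_sort, Multiset.card_erase_of_mem h1, hcard]; rfl
  have hsec_eq : sec = ((s.erase 1).sort (· ≤ ·)).getD (N-2) 0 := by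
    rw [hsec, sort_eq_append h1 hle', List.getD_append _ _ _ _ (by omega)]
  have hmn_eq : mn = ((s.erase 1).sort (· ≤ ·)).getD 0 0 := by
    rw [hmn, sort_eq_append h1 hle', List.getD_append _ _ _ _ (by omega)]
  refine ⟨?_, ?_, ?_⟩
  · exact max_le (hle _ (Multiset.mem_of_mem_erase hsec_mem))
      (hle _ (Multiset.mem_of_mem_erase hmn_mem))
  · intro x hx
    have hx' : x ∈ (s.erase 1).sort (· ≤ ·) := (Multiset.mem_sort _).mpr hx
    obtain ⟨hlo, hhi⟩ := le_getD_sorted (Multiset.pairwise_sort _ _) hx'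
    rw [hlen] at hhi
    rw [← hmn_eq] at hlo
    rw [show N - 1 - 1 = N - 2 by omega, ← hsec_eq] at hhi
    rcases le_or_gt 0 x with hx0 | hx0
    · exact le_trans (by rw [abs_of_nonneg hx0]; exact le_trans hhi (le_abs_self _))
        (le_max_left _ _)
    · refine le_trans ?_ (le_max_right _ _)
      rw [abs_of_neg hx0]
      calc -x ≤ -mn := neg_le_neg hlo
        _ ≤ |mn| := neg_le_abs _
  · intro C hC
    exact max_le (hC _ hsec_mem) (hC _ hmn_mem)

lemma sort_map_mono (s : Multiset ℝ) {f : ℝ → ℝ} (hf : Monotone f) :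
    (s.map f).sort (· ≤ ·) = (s.sort (· ≤ ·)).map f := by
  have hperm : List.Perm ((s.map f).sort (· ≤ ·)) ((s.sort (· ≤ ·)).map f) := by
    rw [← Multiset.coe_eq_coe, Multiset.sort_eq, ← Multiset.map_coe, Multiset.sort_eq]
  have hsorted : ((s.sort (· ≤ ·)).map f).Pairwise (· ≤ ·) :=
    List.Pairwise.map f (fun {a b} hab => hf hab) (Multiset.pairwise_sort _ _)
  exact List.Perm.eq_of_pairwise' (Multiset.pairwise_sort _ _) hsorted hperm

lemma getD_map' {l : List ℝ} (f : ℝ → ℝ) {k : ℕ} (hk : k < l.length) :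
    (l.map f).getD k 0 = f (l.getD k 0) := by
  rw [List.getD_eq_getElem _ _ (by simpa using hk), List.getD_eq_getElem _ _ hk,
    List.getElem_map]

lemma isHermitian_of_isSymm {α : Type*} [Fintype α] {M : Matrix α α ℝ} (h : M.IsSymm) :
    M.IsHermitian := by
  ext i j
  rw [Matrix.conjTranspose_apply]
  have := congrFun (congrFun h i) j
  rw [Matrix.transpose_apply] at this
  simpa using this

lemma normAdj_rowStochastic {V : Type*} [Fintype V] [DecidableEq V] (G : SimpleGraph V)
    [DecidableRel G.Adj] {T : ℕ} (hT : 1 ≤ T) (hreg : G.IsRegularOfDegree T) :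
    RowStochastic (normAdj G T) := by
  constructor
  · intro i j
    unfold normAdj
    split
    · positivity
    · exact le_refl _
  · intro i
    have hTpos : (0:ℝ) < T := by exact_mod_cast hT
    unfold normAdj
    rw [← Finset.sum_filter]
    rw [show Finset.filter (fun j => G.Adj i j) Finset.univ = G.neighborFinset i from
      (SimpleGraph.neighborFinset_eq_filter G).symm]
    rw [Finset.sum_const, show (G.neighborFinset i).card = T from hreg i]
    rw [nsmul_eq_mul]
    field_simp

end Aux

set_option maxHeartbeats 1000000 in
/-- global-expansion bound for the local densifier construction. -/
theorem stmt_2 {n : ℕ} (hn : 2 ≤ n) (T : ℕ) (hT : 1 ≤ T)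
    (G : SimpleGraph (Fin n)) [DecidableRel G.Adj] (hreg : G.IsRegularOfDegree T)
    (H : ℕ) (hH : 1 ≤ H)
    (D0 : ℝ) (hD0 : D0 = (T : ℝ) * 2 ^ H - ((T : ℝ) - 1))
    (At : Matrix (Fin n) (Fin n) ℝ)
    (hAt : At = ((1 + (T : ℝ) * ((2 : ℝ) ^ (H - 1) - 1)) / D0) • (1 : Matrix (Fin n) (Fin n) ℝ)
        + (((T : ℝ) * (2 : ℝ) ^ (H - 1)) / D0) • normAdj G T)
    {m : ℕ} (hm : 2 ≤ m)
    (B : Matrix (Fin m) (Fin m) ℝ) (hBsym : B.IsSymm) (hBrs : RowStochastic B) :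
    twoSidedGap (At ⊗ₖ B) ≥
      min (((T : ℝ) * (2 : ℝ) ^ (H - 1) / ((T : ℝ) * 2 ^ H - ((T : ℝ) - 1)))
            * twoSidedGap (normAdj G T))
        (twoSidedGap B) := by
  classical
  have hn0 : 0 < n := by omega
  have hm0 : 0 < m := by omega
  haveI : Nonempty (Fin n) := ⟨⟨0, hn0⟩⟩
  haveI : Nonempty (Fin m) := ⟨⟨0, hm0⟩⟩
  set A := normAdj G T with hAdef
  have hArs : RowStochastic A := normAdj_rowStochastic G hT hreg
  have hAsymm : A.IsSymm := by
    rw [Matrix.IsSymm]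
    ext i j
    rw [Matrix.transpose_apply]
    show normAdj G T j i = normAdj G T i j
    unfold normAdj
    by_cases hGij : G.Adj i j
    · simp [hGij, (G.adj_comm i j).mp hGij]
    · have : ¬ G.Adj j i := fun h => hGij ((G.adj_comm j i).mp h)
      simp [hGij, this]
  have hAherm : A.IsHermitian := isHermitian_of_isSymm hAsymm
  have hBherm : B.IsHermitian := isHermitian_of_isSymm hBsym
  set a : ℝ := (1 + (T : ℝ) * ((2:ℝ) ^ (H - 1) - 1)) / D0 with ha_def
  set b : ℝ := ((T : ℝ) * (2:ℝ) ^ (H - 1)) / D0 with hb_def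
  clear_value a b
  have hT1 : (1:ℝ) ≤ T := by exact_mod_cast hT
  have h2H : (2:ℝ) ^ H = 2 * 2 ^ (H - 1) := by
    rw [← pow_succ']
    congr 1
    omega
  have hpow1 : (1:ℝ) ≤ (2:ℝ) ^ (H - 1) := one_le_pow₀ (by norm_num)
  have hD0pos : 0 < D0 := by rw [hD0, h2H]; nlinarith
  have hb0 : 0 < b := by
    rw [hb_def]
    apply div_pos _ hD0pos
    nlinarith
  have hab : a + b = 1 := by
    rw [ha_def, hb_def, ← add_div, div_eq_one_iff_eq (ne_of_gt hD0pos), hD0, h2H]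
    ring
  have ha0 : 0 ≤ a := by
    rw [ha_def]
    apply div_nonneg _ (le_of_lt hD0pos)
    nlinarith
  -- eigenvalue facts for A
  have hA1 : (1:ℝ) ∈ eigs A := one_mem_eigs hArs
  have hAabs : ∀ x ∈ eigs A, |x| ≤ 1 := fun x hx => abs_le_one_of_mem_eigs hArs hx
  have hAcard : Multiset.card (eigs A) = n := by
    rw [card_eigs_hermitian hAherm, Fintype.card_fin]
  -- eigenvalue facts for At
  have hAtherm : At.IsHermitian := by
    apply isHermitian_of_isSymm
    rw [Matrix.IsSymm, hAt, Matrix.transpose_add, Matrix.transpose_smul, Matrix.transpose_smul,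
      Matrix.transpose_one]
    rw [Matrix.IsSymm] at hAsymm
    rw [hAsymm]
  have hAteigs : eigs At = (eigs A).map (fun x => a + b * x) := by
    rw [hAt]
    exact eigs_affine hAherm a b
  have hAt1 : (1:ℝ) ∈ eigs At := by
    rw [hAteigs, Multiset.mem_map]
    exact ⟨1, hA1, by rw [mul_one]; exact hab⟩
  have habs_affine : ∀ y : ℝ, |y| ≤ 1 → |a + b * y| ≤ 1 := by
    intro y hy
    calc |a + b * y| ≤ |a| + |b * y| := abs_add_le _ _
      _ = a + b * |y| := by rw [abs_of_nonneg ha0, abs_mul, abs_of_nonneg (le_of_lt hb0)]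
      _ ≤ a + b * 1 := by nlinarith
      _ = 1 := by rw [mul_one]; exact hab
  have hAtabs : ∀ x ∈ eigs At, |x| ≤ 1 := by
    intro x hx
    rw [hAteigs, Multiset.mem_map] at hx
    obtain ⟨y, hy, rfl⟩ := hx
    exact habs_affine y (hAabs y hy)
  have hAtcard : Multiset.card (eigs At) = n := by
    rw [hAteigs, Multiset.card_map, hAcard]
  -- eigenvalue facts for B
  have hB1 : (1:ℝ) ∈ eigs B := one_mem_eigs hBrs
  have hBabs : ∀ x ∈ eigs B, |x| ≤ 1 := fun x hx => abs_le_one_of_mem_eigs hBrs hx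
  have hBcard : Multiset.card (eigs B) = m := by
    rw [card_eigs_hermitian hBherm, Fintype.card_fin]
  -- eigenvalue facts for the Kronecker product
  set f : ℝ → Multiset ℝ := fun x => (eigs B).map (fun y => x * y) with hf_def
  have hPeigs : eigs (At ⊗ₖ B) = (eigs At).bind f := eigs_kronecker hAtherm hBherm
  have hPcard : Multiset.card (eigs (At ⊗ₖ B)) = n * m := by
    rw [hPeigs, Multiset.card_bind]
    have : (eigs At).map (Multiset.card ∘ f) = (eigs At).map (fun _ => m) :=
      Multiset.map_congr rfl (fun x _ => by simp [hf_def, hBcard])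
    rw [this, Multiset.map_const', Multiset.sum_replicate, hAtcard, smul_eq_mul]
  have hP1 : (1:ℝ) ∈ eigs (At ⊗ₖ B) := by
    rw [hPeigs, Multiset.mem_bind]
    refine ⟨1, hAt1, ?_⟩
    rw [hf_def]
    simp only [Multiset.mem_map]
    exact ⟨1, hB1, by norm_num⟩
  have hPabs : ∀ x ∈ eigs (At ⊗ₖ B), |x| ≤ 1 := by
    intro x hx
    rw [hPeigs, Multiset.mem_bind] at hx
    obtain ⟨c, hc, hx2⟩ := hx
    rw [hf_def, Multiset.mem_map] at hx2
    obtain ⟨y, hy, rfl⟩ := hx2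
    rw [abs_mul]
    calc |c| * |y| ≤ 1 * 1 :=
      mul_le_mul (hAtabs c hc) (hBabs y hy) (abs_nonneg _) zero_le_one
    _ = 1 := by norm_num
  have hPerase : (eigs (At ⊗ₖ B)).erase 1
      = (eigs B).erase 1 + ((eigs At).erase 1).bind f := by
    have hf1 : f 1 = eigs B := by rw [hf_def]; simp
    have h1 : eigs (At ⊗ₖ B) = 1 ::ₘ ((eigs B).erase 1 + ((eigs At).erase 1).bind f) := by
      rw [hPeigs]
      conv_lhs => rw [← Multiset.cons_erase hAt1]
      rw [Multiset.cons_bind, hf1]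
      conv_lhs => rw [← Multiset.cons_erase hB1]
      rw [Multiset.cons_add]
    rw [h1, Multiset.erase_cons_head]
  -- apply the master lemma
  obtain ⟨hA_le1, hA_bd, hA_min⟩ := spec_master hAcard hn hA1 hAabs
  obtain ⟨hAt_le1, hAt_bd, hAt_min⟩ := spec_master hAtcard hn hAt1 hAtabs
  obtain ⟨hB_le1, hB_bd, hB_min⟩ := spec_master hBcard hm hB1 hBabs
  obtain ⟨hP_le1, hP_bd, hP_min⟩ :=
    spec_master hPcard (by nlinarith) hP1 hPabs
  set MA := max |((eigs A).sort (· ≤ ·)).getD (n-2) 0| |((eigs A).sort (· ≤ ·)).getD 0 0|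
    with hMA_def
  set MAt := max |((eigs At).sort (· ≤ ·)).getD (n-2) 0| |((eigs At).sort (· ≤ ·)).getD 0 0|
    with hMAt_def
  set MB := max |((eigs B).sort (· ≤ ·)).getD (m-2) 0| |((eigs B).sort (· ≤ ·)).getD 0 0|
    with hMB_def
  set MP := max |((eigs (At ⊗ₖ B)).sort (· ≤ ·)).getD (n*m-2) 0|
    |((eigs (At ⊗ₖ B)).sort (· ≤ ·)).getD 0 0| with hMP_def
  have hMAt0 : 0 ≤ MAt := le_trans (abs_nonneg _) (le_max_left _ _)
  -- MP ≤ max MAt MB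
  have hMP_le : MP ≤ max MAt MB := by
    apply hP_min
    rw [hPerase]
    intro x hx
    rcases Multiset.mem_add.mp hx with hxB | hxA
    · exact le_trans (hB_bd x hxB) (le_max_right _ _)
    · rw [Multiset.mem_bind] at hxA
      obtain ⟨c, hc, hx2⟩ := hxA
      rw [hf_def, Multiset.mem_map] at hx2
      obtain ⟨y, hy, rfl⟩ := hx2
      refine le_trans ?_ (le_max_left _ _)
      rw [abs_mul]
      calc |c| * |y| ≤ MAt * 1 :=
        mul_le_mul (hAt_bd c hc) (hBabs y hy) (abs_nonneg _) hMAt0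
      _ = MAt := by rw [mul_one]
  -- express the gaps in terms of MA, MAt, MB, MP
  have hgapP : twoSidedGap (At ⊗ₖ B) = 1 - MP := by
    rw [twoSidedGap, secondEig, minEig, sortedEigs, hMP_def]
    congr 3
    simp
  have hgapA : twoSidedGap A = 1 - MA := by
    rw [twoSidedGap, secondEig, minEig, sortedEigs, hMA_def, Fintype.card_fin]
  have hgapB : twoSidedGap B = 1 - MB := by
    rw [twoSidedGap, secondEig, minEig, sortedEigs, hMB_def, Fintype.card_fin]
  have hgapAt : twoSidedGap At = 1 - MAt := by
    rw [twoSidedGap, secondEig, minEig, sortedEigs, hMAt_def, Fintype.card_fin]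
  -- eigs At sorted relates to eigs A sorted
  have hsortAt : (eigs At).sort (· ≤ ·) = ((eigs A).sort (· ≤ ·)).map (fun x => a + b * x) := by
    rw [hAteigs]
    exact sort_map_mono _ (fun x y hxy => by nlinarith)
  have hlenA : ((eigs A).sort (· ≤ ·)).length = n := by
    rw [Multiset.length_sort, hAcard]
  have hsecAt : ((eigs At).sort (· ≤ ·)).getD (n-2) 0
      = a + b * ((eigs A).sort (· ≤ ·)).getD (n-2) 0 := by
    rw [hsortAt, getD_map' _ (by omega)]
  have hmnAt : ((eigs At).sort (· ≤ ·)).getD 0 0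
      = a + b * ((eigs A).sort (· ≤ ·)).getD 0 0 := by
    rw [hsortAt, getD_map' _ (by omega)]
  -- twoSidedGap At ≥ b * twoSidedGap A
  have hsA_le : |((eigs A).sort (· ≤ ·)).getD (n-2) 0| ≤ MA := le_max_left _ _
  have hmA_le : |((eigs A).sort (· ≤ ·)).getD 0 0| ≤ MA := le_max_right _ _
  have haffine_bd : ∀ y : ℝ, |y| ≤ MA → |a + b * y| ≤ 1 - b * (1 - MA) := by
    intro y hy
    calc |a + b * y| ≤ |a| + |b * y| := abs_add_le _ _
      _ = a + b * |y| := by rw [abs_of_nonneg ha0, abs_mul, abs_of_nonneg (le_of_lt hb0)]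
      _ ≤ a + b * MA := by nlinarith
      _ = 1 - b * (1 - MA) := by
            have hba : a = 1 - b := by linarith
            rw [hba]; ring
  have hMAt_le : MAt ≤ 1 - b * (1 - MA) := by
    rw [hMAt_def, hsecAt, hmnAt]
    exact max_le (haffine_bd _ hsA_le) (haffine_bd _ hmA_le)
  have hgapAt_ge : twoSidedGap At ≥ b * twoSidedGap A := by
    rw [hgapAt, hgapA]
    linarith
  -- final assembly
  rw [ge_iff_le, ← hD0, ← hb_def]
  calc min (b * twoSidedGap A) (twoSidedGap B)
      ≤ min (twoSidedGap At) (twoSidedGap B) := min_le_min hgapAt_ge (le_refl _)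
    _ ≤ twoSidedGap (At ⊗ₖ B) := by
        rw [hgapP, hgapAt, hgapB]
        rcases le_total MAt MB with h | h
        · rw [max_eq_right h] at hMP_le
          refine le_trans (min_le_right _ _) ?_
          linarith
        · rw [max_eq_left h] at hMP_le
          refine le_trans (min_le_left _ _) ?_
          linarith
end

section
/- Let G be a finite simple T-regular graph with T ≥ 2 and at least 2 edges, let k ≥ 1 be an integer, and let w_I, w_J > 0 be reals. Set r = (T·w_I + w_J)/((2^k − 1)·T·w_I + w_J). Define the outer projection matrix P_o, indexed by the edges of G, by: P_o[e,f] = r/(2T) for distinct edges e, f sharing an endpoint, P_o[e,e] = 1 − ((T−1)/T)·r, and P_o[e,f] = 0 otherwise. Then P_o is a symmetric row-stochastic matrix and TwoSidedGap(P_o) ≥ (TwoSidedGap(A(G))/2)·(T·w_I + w_J)/((2^k − 1)·T·w_I + w_J) ≥ TwoSidedGap(A(G))/(2·(2^k − 1)). -/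
open Matrix Finset BigOperators Kronecker

open scoped Classical

section SpectralHelpers

open Polynomial

variable {n : Type*} [Fintype n] [DecidableEq n] {m : Type*} [Fintype m] [DecidableEq m]

lemma my_scalar_eq_smul_one :
    Matrix.scalar n (X : ℝ[X]) = (X : ℝ[X]) • (1 : Matrix n n ℝ[X]) := by
  rw [Matrix.scalar_apply, Matrix.smul_one_eq_diagonal]

lemma my_charpoly_unitary_conj (U D : Matrix n n ℝ) (hU : U * star U = 1) :
    (U * D * star U).charpoly = D.charpoly := by
  set U' : Matrix n n ℝ[X] := U.map C with hU'def
  set W : Matrix n n ℝ[X] := (star U).map C with hWdef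
  have hUW : U' * W = 1 := by
    rw [hU'def, hWdef, ← Matrix.map_mul, hU]; simp
  have hscal : U' * Matrix.scalar n (X : ℝ[X]) * W = Matrix.scalar n (X : ℝ[X]) := by
    rw [my_scalar_eq_smul_one, mul_smul_comm, smul_mul_assoc, mul_one, hUW]
  have key : Matrix.charmatrix (U * D * (star U)) = U' * Matrix.charmatrix D * W := by
    rw [Matrix.charmatrix, Matrix.charmatrix, Matrix.mul_sub, Matrix.sub_mul, hscal]
    congr 1
    simp [hU'def, hWdef, Matrix.map_mul]
  have hdet : W.det * U'.det = 1 := by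
    rw [mul_comm, ← Matrix.det_mul, hUW, Matrix.det_one]
  rw [Matrix.charpoly, Matrix.charpoly, key, Matrix.det_mul, Matrix.det_mul]
  ring_nf
  rw [mul_comm, ← mul_assoc, hdet, one_mul]

lemma my_charpoly_diagonal (d : n → ℝ) :
    (Matrix.diagonal d).charpoly = ∏ i, (X - C (d i)) := by
  rw [Matrix.charpoly]
  have : Matrix.charmatrix (Matrix.diagonal d) = Matrix.diagonal (fun i => X - C (d i)) := by
    apply Matrix.ext; intro i j
    by_cases h : i = j
    · subst h; rw [Matrix.charmatrix_apply_eq]; simp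
    · rw [Matrix.charmatrix_apply_ne _ _ _ h,
        Matrix.diagonal_apply_ne (fun i => X - C (d i)) h,
        Matrix.diagonal_apply_ne d h]
      simp
  rw [this, Matrix.det_diagonal]

lemma my_eigs_conj_diag (U : Matrix n n ℝ) (hU : U * star U = 1) (d : n → ℝ) :
    (U * Matrix.diagonal d * star U).charpoly.roots = Multiset.map d Finset.univ.val := by
  rw [my_charpoly_unitary_conj U _ hU, my_charpoly_diagonal]
  rw [← Polynomial.roots_multiset_prod_X_sub_C (Multiset.map d Finset.univ.val)]
  congr 1
  rw [Multiset.map_map, Finset.prod_eq_multiset_prod]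
  rfl

lemma my_eigs_isHermitian {A : Matrix n n ℝ} (hA : A.IsHermitian) :
    A.charpoly.roots = Multiset.map hA.eigenvalues Finset.univ.val := by
  have hU : (hA.eigenvectorUnitary : Matrix n n ℝ) * star (hA.eigenvectorUnitary : Matrix n n ℝ)
      = 1 := Matrix.mem_unitaryGroup_iff.mp (hA.eigenvectorUnitary).2
  have hdiag : Matrix.diagonal ((RCLike.ofReal : ℝ → ℝ) ∘ hA.eigenvalues)
      = Matrix.diagonal hA.eigenvalues := by congr 1
  conv_lhs => rw [hA.spectral_theorem]
  rw [hdiag, Unitary.conjStarAlgAut_apply, my_eigs_conj_diag _ hU]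

lemma my_eigs_affine (c d : ℝ) {A : Matrix n n ℝ} (hA : A.IsHermitian) :
    (c • (1 : Matrix n n ℝ) + d • A).charpoly.roots
      = Multiset.map (fun x => c + d * x) A.charpoly.roots := by
  have hU : (hA.eigenvectorUnitary : Matrix n n ℝ) * star (hA.eigenvectorUnitary : Matrix n n ℝ)
      = 1 := Matrix.mem_unitaryGroup_iff.mp (hA.eigenvectorUnitary).2
  set U := (hA.eigenvectorUnitary : Matrix n n ℝ) with hUdef
  have hdiag : Matrix.diagonal ((RCLike.ofReal : ℝ → ℝ) ∘ hA.eigenvalues)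
      = Matrix.diagonal hA.eigenvalues := by congr 1
  have h1 : U * Matrix.diagonal (fun i => c + d * hA.eigenvalues i) * star U
      = c • (1 : Matrix n n ℝ) + d • A := by
    have hsplit : Matrix.diagonal (fun i => c + d * hA.eigenvalues i)
        = Matrix.diagonal (fun _ => c) + Matrix.diagonal (fun i => d * hA.eigenvalues i) := by
      rw [← Matrix.diagonal_add]
    rw [hsplit, Matrix.mul_add, Matrix.add_mul]
    congr 1
    · rw [← Matrix.smul_one_eq_diagonal, Matrix.mul_smul, mul_one, Matrix.smul_mul, hU]
    · have : Matrix.diagonal (fun i => d * hA.eigenvalues i)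
          = d • Matrix.diagonal hA.eigenvalues := by
        rw [← Matrix.diagonal_smul]
        congr 1
      rw [this, Matrix.mul_smul, Matrix.smul_mul]
      congr 1
      conv_rhs => rw [hA.spectral_theorem, hdiag, Unitary.conjStarAlgAut_apply]
  rw [← h1, my_eigs_conj_diag _ hU, my_eigs_isHermitian hA, Multiset.map_map]
  rfl

lemma my_eval_charpoly (M : Matrix n n ℝ) (x : ℝ) :
    M.charpoly.eval x = (x • (1 : Matrix n n ℝ) - M).det := by
  rw [Matrix.charpoly, ← Polynomial.coe_evalRingHom, RingHom.map_det]
  congr 1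
  apply Matrix.ext; intro i j
  by_cases h : i = j
  · subst h
    simp [Matrix.charmatrix_apply_eq, Matrix.one_apply_eq]
  · simp [Matrix.charmatrix_apply_ne _ _ _ h, Matrix.one_apply_ne h]

lemma my_charpoly_mul_comm_roots (N : Matrix n m ℝ) (hn : 0 < Fintype.card n)
    (hm : 0 < Fintype.card m) :
    (Nᵀ * N).charpoly.roots + Multiset.replicate (Fintype.card n) 0
      = (N * Nᵀ).charpoly.roots + Multiset.replicate (Fintype.card m) 0 := by
  have key : (Nᵀ * N).charpoly * X ^ (Fintype.card n)
      = (N * Nᵀ).charpoly * X ^ (Fintype.card m) := by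
    apply Polynomial.funext
    intro x
    simp only [eval_mul, eval_pow, eval_X]
    rcases eq_or_ne x 0 with rfl | hx
    · rw [zero_pow hn.ne', zero_pow hm.ne', mul_zero, mul_zero]
    · rw [my_eval_charpoly, my_eval_charpoly]
      have h1 : x • (1 : Matrix m m ℝ) - Nᵀ * N
          = x • ((1 : Matrix m m ℝ) - Nᵀ * (x⁻¹ • N)) := by
        rw [smul_sub, Matrix.mul_smul, smul_smul, mul_inv_cancel₀ hx, one_smul]
      have h2 : x • (1 : Matrix n n ℝ) - N * Nᵀ
          = x • ((1 : Matrix n n ℝ) - N * (x⁻¹ • Nᵀ)) := by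
        rw [smul_sub, Matrix.mul_smul, smul_smul, mul_inv_cancel₀ hx, one_smul]
      rw [h1, h2, Matrix.det_smul, Matrix.det_smul]
      have h3 : ((1 : Matrix m m ℝ) - Nᵀ * (x⁻¹ • N)).det
          = ((1 : Matrix n n ℝ) - N * (x⁻¹ • Nᵀ)).det := by
        rw [Matrix.det_one_sub_mul_comm, Matrix.smul_mul, Matrix.mul_smul]
      rw [h3]
      ring
  have h4 := congrArg Polynomial.roots key
  rwa [Polynomial.roots_mul, Polynomial.roots_mul, Polynomial.roots_pow, Polynomial.roots_pow,
    Polynomial.roots_X, Multiset.nsmul_singleton, Multiset.nsmul_singleton] at h4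
  · exact mul_ne_zero (N * Nᵀ).charpoly_monic.ne_zero (pow_ne_zero _ X_ne_zero)
  · exact mul_ne_zero (Nᵀ * N).charpoly_monic.ne_zero (pow_ne_zero _ X_ne_zero)

lemma my_eigs_bound {A : Matrix n n ℝ} (hA : A.IsHermitian) (h0 : ∀ i j, 0 ≤ A i j)
    (h1 : ∀ i, ∑ j, A i j = 1) : ∀ x ∈ A.charpoly.roots, -1 ≤ x ∧ x ≤ 1 := by
  intro x hx
  rw [my_eigs_isHermitian hA] at hx
  obtain ⟨i, _, rfl⟩ := Multiset.mem_map.mp hx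
  have hspec : hA.eigenvalues i ∈ spectrum ℝ A := hA.eigenvalues_mem_spectrum_real i
  have hev : Module.End.HasEigenvalue (Matrix.toLin' A) (hA.eigenvalues i) := by
    rw [Module.End.hasEigenvalue_iff_mem_spectrum]
    have heq : spectrum ℝ (Matrix.toLin' A) = spectrum ℝ A :=
      AlgEquiv.spectrum_eq Matrix.toLinAlgEquiv' A
    rwa [heq]
  obtain ⟨kk, hk⟩ := eigenvalue_mem_ball hev
  rw [Metric.mem_closedBall, Real.dist_eq] at hk
  have hsum : ∑ j ∈ Finset.univ.erase kk, ‖A kk j‖ = 1 - A kk kk := by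
    rw [show ∑ j ∈ Finset.univ.erase kk, ‖A kk j‖ = ∑ j ∈ Finset.univ.erase kk, A kk j from
      Finset.sum_congr rfl fun j _ => Real.norm_of_nonneg (h0 kk j)]
    rw [Finset.sum_erase_eq_sub (Finset.mem_univ kk), h1 kk]
  rw [hsum] at hk
  have hkk0 : 0 ≤ A kk kk := h0 kk kk
  have hkk1 : A kk kk ≤ 1 := by
    rw [← h1 kk]
    exact Finset.single_le_sum (fun j _ => h0 kk j) (Finset.mem_univ kk)
  rw [abs_le] at hk
  constructor <;> linarith [hk.1, hk.2]

end SpectralHelpers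

section GraphHelpers

noncomputable def NInc {V : Type*} [Fintype V] [DecidableEq V] (G : SimpleGraph V) [DecidableRel G.Adj] : Matrix V G.edgeSet ℝ :=
  fun v e => G.incMatrix ℝ v ↑e

variable {V : Type*} [Fintype V] [DecidableEq V] (G : SimpleGraph V) [DecidableRel G.Adj]

lemma sum_edgeSubtype (g : Sym2 V → ℝ) (hg : ∀ e, e ∉ G.edgeSet → g e = 0) :
    ∑ e : G.edgeSet, g ↑e = ∑ e : Sym2 V, g e := by
  rw [← Finset.sum_subtype G.edgeFinset (fun x => SimpleGraph.mem_edgeFinset) g]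
  exact Finset.sum_subset (Finset.subset_univ _)
    (fun e _ he => hg e (by simpa [SimpleGraph.mem_edgeFinset] using he))

lemma sum_NInc_row (v : V) : ∑ e : G.edgeSet, NInc G v e = G.degree v := by
  rw [show (∑ e : G.edgeSet, NInc G v e) = ∑ e : G.edgeSet, G.incMatrix ℝ v ↑e from rfl]
  rw [sum_edgeSubtype G (fun e => G.incMatrix ℝ v e)
    (fun e he => G.incMatrix_of_notMem_incidenceSet (fun h => he h.1))]
  exact G.sum_incMatrix_apply

lemma sum_NInc_col (e : G.edgeSet) : ∑ v, NInc G v e = 2 :=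
  G.sum_incMatrix_apply_of_mem_edgeSet e.2

lemma NInc_mul_transpose (u v : V) :
    (NInc G * (NInc G)ᵀ) u v =
      if u = v then (G.degree u : ℝ) else if G.Adj u v then 1 else 0 := by
  have : (NInc G * (NInc G)ᵀ) u v = (G.incMatrix ℝ * (G.incMatrix ℝ)ᵀ) u v := by
    rw [Matrix.mul_apply, Matrix.mul_apply]
    exact sum_edgeSubtype G (fun e => G.incMatrix ℝ u e * G.incMatrix ℝ v e)
      (fun e he => by
        show G.incMatrix ℝ u e * G.incMatrix ℝ v e = 0
        rw [G.incMatrix_of_notMem_incidenceSet (fun h => he h.1), zero_mul])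
  rw [this, G.incMatrix_mul_transpose, Matrix.of_apply]

lemma NInc_transpose_mul (e f : G.edgeSet) :
    ((NInc G)ᵀ * NInc G) e f =
      if e = f then 2 else if (∃ v, v ∈ (e : Sym2 V) ∧ v ∈ (f : Sym2 V)) then 1 else 0 := by
  rw [Matrix.mul_apply]
  simp only [Matrix.transpose_apply]
  by_cases hef : e = f
  · subst hef
    rw [if_pos rfl]
    have : ∀ v, NInc G v e * NInc G v e = NInc G v e := by
      intro v
      rw [NInc, G.incMatrix_apply']
      split_ifs <;> norm_num
    rw [Finset.sum_congr rfl (fun v _ => this v)]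
    exact sum_NInc_col G e
  · rw [if_neg hef]
    have hterm : ∀ v, NInc G v e * NInc G v f =
        if v ∈ (e : Sym2 V) ∧ v ∈ (f : Sym2 V) then 1 else 0 := by
      intro v
      rw [NInc, NInc, G.incMatrix_apply', G.incMatrix_apply']
      have h1 : (e : Sym2 V) ∈ G.incidenceSet v ↔ v ∈ (e : Sym2 V) :=
        ⟨fun h => h.2, fun h => ⟨e.2, h⟩⟩
      have h2 : (f : Sym2 V) ∈ G.incidenceSet v ↔ v ∈ (f : Sym2 V) :=
        ⟨fun h => h.2, fun h => ⟨f.2, h⟩⟩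
      split_ifs with ha hb hc hd he' <;> simp_all
    rw [Finset.sum_congr rfl (fun v _ => hterm v)]
    rw [Finset.sum_ite, Finset.sum_const_zero, add_zero, Finset.sum_const, nsmul_eq_mul, mul_one]
    by_cases hsh : ∃ v, v ∈ (e : Sym2 V) ∧ v ∈ (f : Sym2 V)
    · rw [if_pos hsh]
      obtain ⟨v0, hv0⟩ := hsh
      have : Finset.filter (fun v => v ∈ (e : Sym2 V) ∧ v ∈ (f : Sym2 V)) Finset.univ = {v0} := by
        apply Finset.eq_singleton_iff_unique_mem.mpr
        refine ⟨by simp [hv0], fun w hw => ?_⟩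
        simp only [Finset.mem_filter, Finset.mem_univ, true_and] at hw
        by_contra hne
        have he2 : (e : Sym2 V) = s(w, v0) :=
          (Sym2.mem_and_mem_iff hne).mp ⟨hw.1, hv0.1⟩
        have hf2 : (f : Sym2 V) = s(w, v0) :=
          (Sym2.mem_and_mem_iff hne).mp ⟨hw.2, hv0.2⟩
        exact hef (Subtype.ext (he2.trans hf2.symm))
      rw [this]
      simp
    · rw [if_neg hsh]
      have : Finset.filter (fun v => v ∈ (e : Sym2 V) ∧ v ∈ (f : Sym2 V)) Finset.univ = ∅ := by
        apply Finset.filter_eq_empty_iff.mpr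
        intro v _
        exact fun h => hsh ⟨v, h⟩
      rw [this]
      simp

lemma normAdj_isHermitian (T : ℕ) : (normAdj G T).IsHermitian := by
  apply Matrix.ext
  intro u v
  simp only [Matrix.conjTranspose_apply, normAdj, star_trivial]
  by_cases h : G.Adj v u
  · rw [if_pos h, if_pos (G.adj_symm h)]
  · rw [if_neg h, if_neg (fun h2 => h (G.adj_symm h2))]

lemma normAdj_nonneg (T : ℕ) (u v : V) : 0 ≤ normAdj G T u v := by
  rw [normAdj]; split_ifs <;> positivity

lemma normAdj_rowsum {T : ℕ} (hT : 0 < T) (hreg : G.IsRegularOfDegree T) (u : V) :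
    ∑ v, normAdj G T u v = 1 := by
  rw [show (∑ v, normAdj G T u v) = ∑ v, if G.Adj u v then 1 / (T : ℝ) else 0 from rfl]
  rw [Finset.sum_ite, Finset.sum_const_zero, add_zero, Finset.sum_const, nsmul_eq_mul]
  rw [← SimpleGraph.neighborFinset_eq_filter, ← SimpleGraph.degree, hreg u]
  field_simp

lemma NInc_mul_transpose_eq {T : ℕ} (hT : 0 < T) (hreg : G.IsRegularOfDegree T) :
    NInc G * (NInc G)ᵀ = (T : ℝ) • (1 : Matrix V V ℝ) + (T : ℝ) • normAdj G T := by
  apply Matrix.ext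
  intro u v
  rw [NInc_mul_transpose G u v]
  simp only [Matrix.add_apply, Matrix.smul_apply, Matrix.one_apply, normAdj, smul_eq_mul]
  by_cases h : u = v
  · subst h
    rw [if_pos rfl, if_pos rfl, if_neg (G.irrefl), hreg u]
    ring
  · rw [if_neg h, if_neg h]
    have hT' : (T : ℝ) ≠ 0 := Nat.cast_ne_zero.mpr hT.ne'
    split_ifs with h2
    · field_simp
      ring
    · ring

variable {G} {T : ℕ} (hT : 2 ≤ T) {r : ℝ} (Po : Matrix G.edgeSet G.edgeSet ℝ)
    (hPo : ∀ e f : G.edgeSet, Po e f =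
      if e = f then 1 - (((T : ℝ) - 1) / T) * r
      else if ∃ v : V, v ∈ (e : Sym2 V) ∧ v ∈ (f : Sym2 V) then r / (2 * T) else 0)

include hT hPo

lemma Po_eq : Po = (1 - r) • (1 : Matrix G.edgeSet G.edgeSet ℝ)
    + (r / (2 * T)) • ((NInc G)ᵀ * NInc G) := by
  have hT' : (T : ℝ) ≠ 0 := by
    have : (0:ℝ) < T := by exact_mod_cast lt_of_lt_of_le (by norm_num) hT
    exact this.ne'
  apply Matrix.ext
  intro e f
  rw [hPo e f]
  simp only [Matrix.add_apply, Matrix.smul_apply, Matrix.one_apply, smul_eq_mul]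
  rw [NInc_transpose_mul G e f]
  by_cases h : e = f
  · subst h
    rw [if_pos rfl, if_pos rfl, if_pos rfl]
    field_simp
    ring
  · rw [if_neg h, if_neg h, if_neg h]
    split_ifs with h2
    · ring
    · ring

lemma Po_rowsum (hTreg : G.IsRegularOfDegree T) (e : G.edgeSet) : ∑ f, Po e f = 1 := by
  have hT' : (T : ℝ) ≠ 0 := by
    have : (0:ℝ) < T := by exact_mod_cast lt_of_lt_of_le (by norm_num) hT
    exact this.ne'
  rw [Po_eq hT Po hPo]
  simp only [Matrix.add_apply, Matrix.smul_apply, smul_eq_mul]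
  rw [Finset.sum_add_distrib, ← Finset.mul_sum, ← Finset.mul_sum]
  have h1 : ∑ f, (1 : Matrix G.edgeSet G.edgeSet ℝ) e f = 1 := by
    simp [Matrix.one_apply]
  have h2 : ∑ f, ((NInc G)ᵀ * NInc G) e f = 2 * T := by
    simp only [Matrix.mul_apply, Matrix.transpose_apply]
    rw [Finset.sum_comm]
    have : ∀ v, ∑ f : G.edgeSet, NInc G v e * NInc G v f = NInc G v e * T := by
      intro v
      rw [← Finset.mul_sum, sum_NInc_row G v, hTreg v]
    rw [Finset.sum_congr rfl fun v _ => this v, ← Finset.sum_mul, sum_NInc_col G e]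
  rw [h1, h2]
  field_simp
  ring

lemma Po_nonneg (hr0 : 0 ≤ r) (hr1 : r ≤ 1) (e f : G.edgeSet) : 0 ≤ Po e f := by
  have hT0 : (0:ℝ) < T := by exact_mod_cast lt_of_lt_of_le (by norm_num) hT
  rw [hPo e f]
  split_ifs with h1 h2
  · have hfrac : ((T:ℝ) - 1) / T ≤ 1 := by
      rw [div_le_one hT0]; linarith
    nlinarith
  · positivity
  · exact le_refl 0

lemma Po_symm : Po.IsSymm := by
  apply Matrix.ext
  intro e f
  show Po f e = Po e f
  rw [hPo f e, hPo e f]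
  by_cases h : e = f
  · subst h; rfl
  · rw [if_neg h, if_neg (fun h2 => h h2.symm)]
    have : (∃ v, v ∈ (f : Sym2 V) ∧ v ∈ (e : Sym2 V)) ↔
        (∃ v, v ∈ (e : Sym2 V) ∧ v ∈ (f : Sym2 V)) := exists_congr fun v => and_comm
    split_ifs with ha hb hb
    · rfl
    · exact absurd (this.mp ha) hb
    · exact absurd (this.mpr hb) ha
    · rfl

end GraphHelpers

/-- the outer projection chain, indexed by the edges of G, is symmetric,
row-stochastic, and has two-sided gap at least
(TwoSidedGap(A(G))/2)·(T·w_I + w_J)/((2^k − 1)·T·w_I + w_J) ≥ TwoSidedGap(A(G))/(2(2^k−1)). -/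
theorem stmt_7 {V : Type*} [Fintype V] [DecidableEq V] (T : ℕ) (hT : 2 ≤ T)
    (G : SimpleGraph V) [DecidableRel G.Adj] (hreg : G.IsRegularOfDegree T)
    (hE : 2 ≤ Fintype.card G.edgeSet)
    (k : ℕ) (hk : 1 ≤ k) (wI wJ : ℝ) (hwI : 0 < wI) (hwJ : 0 < wJ)
    (r : ℝ) (hr : r = ((T : ℝ) * wI + wJ) / (((2 : ℝ) ^ k - 1) * T * wI + wJ))
    (Po : Matrix G.edgeSet G.edgeSet ℝ)
    (hPo : ∀ e f : G.edgeSet, Po e f =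
      if e = f then 1 - (((T : ℝ) - 1) / T) * r
      else if ∃ v : V, v ∈ (e : Sym2 V) ∧ v ∈ (f : Sym2 V) then r / (2 * T) else 0) :
    RowStochastic Po ∧ Po.IsSymm ∧
    twoSidedGap Po ≥ (twoSidedGap (normAdj G T) / 2)
        * (((T : ℝ) * wI + wJ) / (((2 : ℝ) ^ k - 1) * T * wI + wJ)) ∧
    (twoSidedGap (normAdj G T) / 2)
        * (((T : ℝ) * wI + wJ) / (((2 : ℝ) ^ k - 1) * T * wI + wJ))
      ≥ twoSidedGap (normAdj G T) / (2 * ((2 : ℝ) ^ k - 1)) := by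
  classical
  have hT0 : (0:ℝ) < T := by exact_mod_cast lt_of_lt_of_le (by norm_num) hT
  have hTne : (T:ℝ) ≠ 0 := hT0.ne'
  have h2k : (2:ℝ) ≤ 2 ^ k := by
    calc (2:ℝ) = 2 ^ 1 := (pow_one 2).symm
    _ ≤ 2 ^ k := pow_le_pow_right₀ (by norm_num) hk
  have hTwI : 0 < (T:ℝ) * wI := by positivity
  have hden_pos : 0 < ((2:ℝ)^k - 1) * T * wI + wJ := by nlinarith
  have hnum_pos : 0 < (T:ℝ) * wI + wJ := by linarith
  have hr_pos : 0 < r := by rw [hr]; positivity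
  have hr_le1 : r ≤ 1 := by
    rw [hr, div_le_one hden_pos]; nlinarith
  -- the affine map on eigenvalues
  set f : ℝ → ℝ := fun x => 1 - r + r / 2 + (r / 2) * x with hf_def
  have hfmono : ∀ x y : ℝ, x ≤ y → f x ≤ f y := by
    intro x y hxy
    simp only [hf_def]
    nlinarith
  have hfneg1 : f (-1) = 1 - r := by simp only [hf_def]; ring
  -- cardinalities
  have hm0 : 0 < Fintype.card G.edgeSet := lt_of_lt_of_le (by norm_num) hE
  have hadj : ∃ a b : V, G.Adj a b := by
    have hne : Nonempty G.edgeSet := Fintype.card_pos_iff.mp hm0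
    obtain ⟨e, he⟩ := hne
    induction e using Sym2.ind with
    | _ a b => exact ⟨a, b, G.mem_edgeSet.mp he⟩
  obtain ⟨a, b, hab⟩ := hadj
  have hn2 : 2 ≤ Fintype.card V := by
    haveI : Nontrivial V := ⟨a, b, G.ne_of_adj hab⟩
    exact Fintype.one_lt_card
  have hn0 : 0 < Fintype.card V := by omega
  have hnm : Fintype.card V ≤ Fintype.card G.edgeSet := by
    have hsum : ∑ v : V, G.degree v = 2 * G.edgeFinset.card :=
      G.sum_degrees_eq_twice_card_edges
    have hreg' : ∑ v : V, G.degree v = Fintype.card V * T := by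
      rw [Finset.sum_congr rfl fun v _ => hreg v, Finset.sum_const, smul_eq_mul,
        Finset.card_univ]
    have hcard : G.edgeFinset.card = Fintype.card G.edgeSet := by
      rw [SimpleGraph.edgeFinset, Set.toFinset_card]
    have key : Fintype.card V * T = 2 * Fintype.card G.edgeSet := by
      rw [← hreg', hsum, hcard]
    have h1 : Fintype.card V * 2 ≤ Fintype.card V * T :=
      Nat.mul_le_mul_left _ hT
    rw [key] at h1
    omega
  -- spectral data of the normalized adjacency matrix
  have hA : (normAdj G T).IsHermitian := normAdj_isHermitian G T
  have hA_rowsum : ∀ u, ∑ v, normAdj G T u v = 1 :=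
    normAdj_rowsum G (by omega) hreg
  have hA_bound : ∀ x ∈ (normAdj G T).charpoly.roots, -1 ≤ x ∧ x ≤ 1 :=
    my_eigs_bound hA (normAdj_nonneg G T) hA_rowsum
  have hNtN_herm : (((NInc G)ᵀ * NInc G)).IsHermitian := by
    apply Matrix.ext
    intro e f
    simp only [Matrix.conjTranspose_apply, Matrix.mul_apply, Matrix.transpose_apply,
      star_trivial]
    exact Finset.sum_congr rfl fun v _ => mul_comm _ _
  -- eigenvalue multisets
  have hNNt_roots : (NInc G * (NInc G)ᵀ).charpoly.roots
      = ((normAdj G T).charpoly.roots).map (fun x => (T:ℝ) + T * x) := by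
    rw [NInc_mul_transpose_eq G (by omega) hreg]
    exact my_eigs_affine _ _ hA
  have hrel := my_charpoly_mul_comm_roots (NInc G) hn0 hm0
  have hNtN_roots : ((NInc G)ᵀ * NInc G).charpoly.roots
      = ((normAdj G T).charpoly.roots).map (fun x => (T:ℝ) + T * x)
        + Multiset.replicate (Fintype.card G.edgeSet - Fintype.card V) 0 := by
    have hmsplit : Multiset.replicate (Fintype.card G.edgeSet) (0:ℝ)
        = Multiset.replicate (Fintype.card G.edgeSet - Fintype.card V) 0
          + Multiset.replicate (Fintype.card V) 0 := by
      rw [← Multiset.replicate_add, Nat.sub_add_cancel hnm]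
    rw [hNNt_roots, hmsplit, ← add_assoc] at hrel
    exact add_right_cancel hrel
  have hPo_roots : Po.charpoly.roots
      = ((normAdj G T).charpoly.roots).map f
        + Multiset.replicate (Fintype.card G.edgeSet - Fintype.card V) (1 - r) := by
    rw [Po_eq hT Po hPo, my_eigs_affine _ _ hNtN_herm, hNtN_roots, Multiset.map_add,
      Multiset.map_map, Multiset.map_replicate]
    congr 1
    · apply Multiset.map_congr rfl
      intro x hx
      show (1 - r) + (r / (2 * (T:ℝ))) * ((T:ℝ) + T * x) = f x
      simp only [hf_def]
      field_simp
      ring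
    · congr 1
      show (1 - r) + (r / (2 * (T:ℝ))) * 0 = 1 - r
      ring
  -- sorted lists
  set LA := sortedEigs (normAdj G T) with hLA_def
  have hLA_sorted : LA.Pairwise (· ≤ ·) := Multiset.pairwise_sort _ _
  have hLA_coe : ((LA : List ℝ) : Multiset ℝ) = (normAdj G T).charpoly.roots :=
    Multiset.sort_eq _ _
  have hLA_len : LA.length = Fintype.card V := by
    rw [hLA_def, sortedEigs, Multiset.length_sort, eigs, my_eigs_isHermitian hA]
    simp
  have hLA_bound : ∀ x ∈ LA, -1 ≤ x ∧ x ≤ 1 := by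
    intro x hx
    exact hA_bound x (by rw [← hLA_coe]; exact_mod_cast hx)
  set C : List ℝ := List.replicate (Fintype.card G.edgeSet - Fintype.card V) (1 - r)
      ++ LA.map f with hC_def
  have hC_sorted : C.Pairwise (· ≤ ·) := by
    rw [hC_def, List.pairwise_append]
    refine ⟨List.pairwise_replicate.mpr (Or.inr le_rfl),
      List.Pairwise.map f hfmono hLA_sorted, ?_⟩
    intro x hx y hy
    rw [List.eq_of_mem_replicate hx]
    obtain ⟨z, hz, rfl⟩ := List.mem_map.mp hy
    rw [← hfneg1]
    exact hfmono _ _ (hLA_bound z hz).1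
  have hC_coe : ((C : List ℝ) : Multiset ℝ) = Po.charpoly.roots := by
    rw [hC_def, hPo_roots, ← Multiset.coe_add, Multiset.coe_replicate, ← Multiset.map_coe,
      hLA_coe, add_comm]
  have hsortPo : sortedEigs Po = C := by
    apply List.Perm.eq_of_pairwise' (Multiset.pairwise_sort _ _) hC_sorted
    apply Multiset.coe_eq_coe.mp
    show ((Multiset.sort (eigs Po) (· ≤ ·) : List ℝ) : Multiset ℝ) = _
    rw [Multiset.sort_eq, hC_coe]
    rfl
  -- extraction of the two relevant eigenvalues of Po
  have hsecondPo : secondEig Po = f (secondEig (normAdj G T)) := by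
    show (sortedEigs Po).getD (Fintype.card G.edgeSet - 2) 0 = _
    rw [hsortPo, hC_def,
      List.getD_append_right _ _ _ _ (by rw [List.length_replicate]; omega),
      List.length_replicate,
      show Fintype.card G.edgeSet - 2 - (Fintype.card G.edgeSet - Fintype.card V)
        = Fintype.card V - 2 from by omega]
    have hlt : Fintype.card V - 2 < (LA.map f).length := by
      rw [List.length_map, hLA_len]; omega
    rw [List.getD_eq_getElem _ _ hlt, List.getElem_map]
    rw [← List.getD_eq_getElem LA 0 (by rw [hLA_len]; omega)]
    rfl
  have hminPo : minEig Po = 1 - r ∨ minEig Po = f (minEig (normAdj G T)) := by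
    rcases Nat.lt_or_ge (Fintype.card V) (Fintype.card G.edgeSet) with hlt | hge
    · left
      show (sortedEigs Po).getD 0 0 = 1 - r
      rw [hsortPo, hC_def,
        List.getD_append _ _ _ _ (by rw [List.length_replicate]; omega),
        List.getD_eq_getElem _ _ (by rw [List.length_replicate]; omega)]
      simp
    · right
      have heq : Fintype.card G.edgeSet - Fintype.card V = 0 := by omega
      show (sortedEigs Po).getD 0 0 = _
      rw [hsortPo, hC_def, heq, List.replicate_zero, List.nil_append,
        List.getD_eq_getElem _ _ (by rw [List.length_map, hLA_len]; omega),
        List.getElem_map]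
      rw [← List.getD_eq_getElem LA 0 (by rw [hLA_len]; omega)]
      rfl
  -- bounds on the eigenvalues of A
  have hlam2mem : secondEig (normAdj G T) ∈ LA := by
    show LA.getD (Fintype.card V - 2) 0 ∈ LA
    rw [List.getD_eq_getElem _ _ (by rw [hLA_len]; omega)]
    exact List.getElem_mem _
  have hlammmem : minEig (normAdj G T) ∈ LA := by
    show LA.getD 0 0 ∈ LA
    rw [List.getD_eq_getElem _ _ (by rw [hLA_len]; omega)]
    exact List.getElem_mem _
  have hlam2 := hLA_bound _ hlam2mem
  have hlamm := hLA_bound _ hlammmem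
  set maxA := max |secondEig (normAdj G T)| |minEig (normAdj G T)| with hmaxA_def
  have hmaxA0 : 0 ≤ maxA := le_trans (abs_nonneg _) (le_max_left _ _)
  have hmaxA1 : maxA ≤ 1 :=
    max_le (abs_le.mpr ⟨hlam2.1, hlam2.2⟩) (abs_le.mpr ⟨hlamm.1, hlamm.2⟩)
  have hgapA : twoSidedGap (normAdj G T) = 1 - maxA := rfl
  have habs_f : ∀ x : ℝ, -1 ≤ x → |x| ≤ maxA → |f x| ≤ f maxA := by
    intro x hx1 hxm
    have h1 : 1 - r ≤ f x := by rw [← hfneg1]; exact hfmono _ _ hx1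
    rw [abs_of_nonneg (by linarith : (0:ℝ) ≤ f x)]
    exact hfmono _ _ (le_trans (le_abs_self x) hxm)
  have hf1r : |1 - r| ≤ f maxA := by
    rw [abs_of_nonneg (by linarith : (0:ℝ) ≤ 1 - r), ← hfneg1]
    exact hfmono _ _ (by linarith)
  have hs : |secondEig Po| ≤ f maxA := by
    rw [hsecondPo]
    exact habs_f _ hlam2.1 (le_max_left _ _)
  have hmn : |minEig Po| ≤ f maxA := by
    rcases hminPo with h | h
    · rw [h]; exact hf1r
    · rw [h]; exact habs_f _ hlamm.1 (le_max_right _ _)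
  have hmaxPo : max |secondEig Po| |minEig Po| ≤ f maxA := max_le hs hmn
  -- final assembly
  have hgapPo : twoSidedGap Po ≥ (twoSidedGap (normAdj G T) / 2) * r := by
    show 1 - max |secondEig Po| |minEig Po| ≥ _
    rw [hgapA]
    have hcalc : ((1 - maxA) / 2) * r = 1 - f maxA := by
      simp only [hf_def]
      ring
    rw [hcalc]
    linarith
  have h2k1 : 0 < (2:ℝ)^k - 1 := by linarith
  have hgapA0 : 0 ≤ twoSidedGap (normAdj G T) := by rw [hgapA]; linarith
  have hrlb : 1 / ((2:ℝ)^k - 1) ≤ r := by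
    rw [hr, div_le_div_iff₀ h2k1 hden_pos]
    nlinarith
  refine ⟨⟨Po_nonneg hT Po hPo hr_pos.le hr_le1, Po_rowsum hT Po hPo hreg⟩,
    Po_symm hT Po hPo, ?_, ?_⟩
  · rw [← hr]
    exact hgapPo
  · rw [← hr]
    calc twoSidedGap (normAdj G T) / (2 * ((2:ℝ)^k - 1))
        = (twoSidedGap (normAdj G T) / 2) * (1 / ((2:ℝ)^k - 1)) := by
          rw [mul_one_div, div_div]
      _ ≤ (twoSidedGap (normAdj G T) / 2) * r :=
          mul_le_mul_of_nonneg_left hrlb (by positivity)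
end

section
/- For integers k ≥ 0 and s ≥ k+2, the down-up walk P on (k+1)-subsets of an s-element set satisfies OneSidedGap(P) ≥ 1/(k+1). -/
open Matrix Finset BigOperators Kronecker

namespace DownUp

open Polynomial

variable {s : ℕ}

/-- The 0/1 inclusion matrix between `(k+1)`-sets and `k`-sets. -/
noncomputable def Inc (s k : ℕ) :
    Matrix {S : Finset (Fin s) // S.card = k + 1} {T : Finset (Fin s) // T.card = k} ℝ :=
  fun S T => if T.1 ⊆ S.1 then 1 else 0

lemma sum_boole_subtype (m : ℕ) (p : Finset (Fin s) → Prop) [DecidablePred p] :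
    (∑ S : {S : Finset (Fin s) // S.card = m}, if p S.1 then (1 : ℝ) else 0)
      = (((univ : Finset (Fin s)).powersetCard m).filter p).card := by
  classical
  rw [Finset.sum_boole]
  norm_cast
  apply Finset.card_nbij (fun S => S.1)
  · intro a ha
    exact Finset.mem_filter.mpr ⟨Finset.mem_powersetCard_univ.mpr a.2, by simpa using ha⟩
  · intro a _ b _ h
    exact Subtype.ext h
  · intro S hS
    simp only [Finset.coe_filter, Finset.mem_powersetCard_univ, Set.mem_setOf_eq,
      Finset.mem_univ, true_and] at hS
    exact ⟨⟨S, hS.1⟩, by simp [hS.2], rfl⟩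

lemma count_supersets_succ (A : Finset (Fin s)) (_hA : A.card + 1 ≤ s) :
    ((((univ : Finset (Fin s))).powersetCard (A.card + 1)).filter (fun S => A ⊆ S)).card
      = s - A.card := by
  classical
  have himg : (((univ : Finset (Fin s))).powersetCard (A.card + 1)).filter (fun S => A ⊆ S)
      = Aᶜ.image (fun x => insert x A) := by
    ext S
    simp only [Finset.mem_filter, Finset.mem_powersetCard_univ, Finset.mem_image,
      Finset.mem_compl]
    constructor
    · rintro ⟨hcard, hsub⟩
      have hne : (S \ A).Nonempty := by
        rw [← Finset.card_pos, Finset.card_sdiff_of_subset hsub, hcard]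
        omega
      obtain ⟨x, hx⟩ := hne
      rw [Finset.mem_sdiff] at hx
      refine ⟨x, hx.2, ?_⟩
      apply Finset.eq_of_subset_of_card_le
      · exact Finset.insert_subset hx.1 hsub
      · rw [Finset.card_insert_of_notMem hx.2, hcard]
    · rintro ⟨x, hx, rfl⟩
      exact ⟨by rw [Finset.card_insert_of_notMem hx], Finset.subset_insert _ _⟩
  rw [himg, Finset.card_image_of_injOn, Finset.card_compl, Fintype.card_fin]
  intro x hx y hy h
  simp only [Finset.coe_compl, Set.mem_compl_iff, Finset.mem_coe] at hx hy
  have : x ∈ insert y A := by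
    have h' : insert x A = insert y A := h
    rw [← h']; exact Finset.mem_insert_self x A
  rcases Finset.mem_insert.mp this with h' | h'
  · exact h'
  · exact absurd h' hx

lemma count_supersets_eq (A : Finset (Fin s)) :
    ((((univ : Finset (Fin s))).powersetCard A.card).filter (fun S => A ⊆ S)).card = 1 := by
  classical
  have : (((univ : Finset (Fin s))).powersetCard A.card).filter (fun S => A ⊆ S) = {A} := by
    ext S
    simp only [Finset.mem_filter, Finset.mem_powersetCard_univ, Finset.mem_singleton]
    constructor
    · rintro ⟨hcard, hsub⟩
      exact (Finset.eq_of_subset_of_card_le hsub (le_of_eq hcard)).symm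
    · rintro rfl
      exact ⟨rfl, Finset.Subset.refl _⟩
  rw [this, Finset.card_singleton]

lemma count_supersets_lt (A : Finset (Fin s)) (m : ℕ) (hm : m < A.card) :
    ((((univ : Finset (Fin s))).powersetCard m).filter (fun S => A ⊆ S)).card = 0 := by
  classical
  rw [Finset.card_eq_zero, Finset.filter_eq_empty_iff]
  intro S hS
  rw [Finset.mem_powersetCard_univ] at hS
  intro hsub
  have := Finset.card_le_card hsub
  omega

lemma filter_subsets (A : Finset (Fin s)) (m : ℕ) :
    (((univ : Finset (Fin s)).powersetCard m).filter (fun S => S ⊆ A)) = A.powersetCard m := by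
  classical
  ext S
  simp only [Finset.mem_filter, Finset.mem_powersetCard_univ, Finset.mem_powersetCard]
  exact ⟨fun h => ⟨h.2, h.1.2⟩, fun h => ⟨⟨Finset.subset_univ S, h.2⟩, h.1⟩⟩

lemma pair_count (k : ℕ) (hks : k + 2 ≤ s) (T T' : {T : Finset (Fin s) // T.card = k + 1}) :
    (∑ S : {S : Finset (Fin s) // S.card = k + 1 + 1}, Inc s (k+1) S T * Inc s (k+1) S T')
      = (∑ R : {R : Finset (Fin s) // R.card = k}, Inc s k T R * Inc s k T' R)
        + (if T = T' then (s : ℝ) - 2 * (k + 1) else 0) := by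
  classical
  have hL : (∑ S : {S : Finset (Fin s) // S.card = k + 1 + 1},
        Inc s (k+1) S T * Inc s (k+1) S T')
      = ((((univ : Finset (Fin s))).powersetCard (k+1+1)).filter
          (fun S => T.1 ∪ T'.1 ⊆ S)).card := by
    rw [← sum_boole_subtype (k+1+1) (fun S => T.1 ∪ T'.1 ⊆ S)]
    refine Finset.sum_congr rfl fun S _ => ?_
    by_cases h1 : T.1 ⊆ S.1 <;> by_cases h2 : T'.1 ⊆ S.1 <;>
      simp [Inc, h1, h2, Finset.union_subset_iff]
  have hR : (∑ R : {R : Finset (Fin s) // R.card = k}, Inc s k T R * Inc s k T' R)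
      = ((T.1 ∩ T'.1).card.choose k : ℝ) := by
    rw [show (∑ R : {R : Finset (Fin s) // R.card = k}, Inc s k T R * Inc s k T' R)
        = ∑ R : {R : Finset (Fin s) // R.card = k},
            if R.1 ⊆ T.1 ∩ T'.1 then (1:ℝ) else 0 from
      Finset.sum_congr rfl fun R _ => by
        by_cases h1 : R.1 ⊆ T.1 <;> by_cases h2 : R.1 ⊆ T'.1 <;>
          simp [Inc, h1, h2, Finset.subset_inter_iff]]
    rw [sum_boole_subtype k (fun R => R ⊆ T.1 ∩ T'.1), filter_subsets,
      Finset.card_powersetCard]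
  by_cases hTT : T = T'
  · subst hTT
    rw [if_pos rfl, hL, hR]
    have h1 : T.1 ∪ T.1 = T.1 := Finset.union_self _
    rw [h1]
    have h2 := count_supersets_succ (s := s) T.1 (by rw [T.2]; omega)
    rw [T.2] at h2
    rw [h2]
    have h3 : T.1 ∩ T.1 = T.1 := Finset.inter_self _
    rw [h3, T.2, Nat.choose_succ_self_right]
    have : ((s - (k+1) : ℕ) : ℝ) = (s : ℝ) - (k + 1) := by
      push_cast [Nat.cast_sub (by omega : k + 1 ≤ s)]; ring
    rw [this]
    push_cast
    ring
  · rw [if_neg hTT, add_zero, hL, hR]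
    have hcaplt : (T.1 ∩ T'.1).card < k + 1 := by
      rcases lt_or_eq_of_le (le_trans (Finset.card_le_card (Finset.inter_subset_left))
        (le_of_eq T.2)) with h | h
      · exact h
      · exfalso
        have heq : T.1 ∩ T'.1 = T.1 :=
          Finset.eq_of_subset_of_card_le Finset.inter_subset_left (by rw [h, T.2])
        have hsub : T.1 ⊆ T'.1 := by
          intro a ha; have : a ∈ T.1 ∩ T'.1 := by rw [heq]; exact ha
          exact (Finset.mem_inter.mp this).2
        exact hTT (Subtype.ext (Finset.eq_of_subset_of_card_le hsub (by rw [T.2, T'.2])))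
    have hcards : (T.1 ∪ T'.1).card + (T.1 ∩ T'.1).card = (k+1) + (k+1) := by
      rw [Finset.card_union_add_card_inter, T.2, T'.2]
    rcases Nat.lt_or_ge (T.1 ∩ T'.1).card k with hlt | hge
    · have hu : k + 1 + 1 < (T.1 ∪ T'.1).card := by omega
      rw [count_supersets_lt (T.1 ∪ T'.1) (k+1+1) hu, Nat.choose_eq_zero_of_lt hlt]
    · have hk : (T.1 ∩ T'.1).card = k := by omega
      have hu : (T.1 ∪ T'.1).card = k + 1 + 1 := by omega
      have h2 := count_supersets_eq (s := s) (T.1 ∪ T'.1)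
      rw [hu] at h2
      rw [h2, hk, Nat.choose_self]

lemma expand_mulVec (k : ℕ) (y : {T : Finset (Fin s) // T.card = k + 1} → ℝ) :
    (Inc s (k+1) *ᵥ y) ⬝ᵥ (Inc s (k+1) *ᵥ y)
      = ∑ T, ∑ T', y T * y T' *
          ∑ S : {S : Finset (Fin s) // S.card = k + 1 + 1}, Inc s (k+1) S T * Inc s (k+1) S T' := by
  simp only [dotProduct, mulVec, dotProduct]
  rw [show (∑ S : {S : Finset (Fin s) // S.card = k + 1 + 1},
      (∑ T, Inc s (k+1) S T * y T) * (∑ T', Inc s (k+1) S T' * y T'))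
    = ∑ S : {S : Finset (Fin s) // S.card = k + 1 + 1}, ∑ T, ∑ T',
        (Inc s (k+1) S T * y T) * (Inc s (k+1) S T' * y T') from
    Finset.sum_congr rfl fun S _ => by rw [Finset.sum_mul_sum]]
  rw [Finset.sum_comm]
  refine Finset.sum_congr rfl fun T _ => ?_
  rw [Finset.sum_comm]
  refine Finset.sum_congr rfl fun T' _ => ?_
  rw [Finset.mul_sum]
  exact Finset.sum_congr rfl fun S _ => by ring

lemma expand_vecMul (k : ℕ) (y : {T : Finset (Fin s) // T.card = k + 1} → ℝ) :
    (y ᵥ* Inc s k) ⬝ᵥ (y ᵥ* Inc s k)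
      = ∑ T, ∑ T', y T * y T' *
          ∑ R : {R : Finset (Fin s) // R.card = k}, Inc s k T R * Inc s k T' R := by
  simp only [dotProduct, vecMul, dotProduct]
  rw [show (∑ R : {R : Finset (Fin s) // R.card = k},
      (∑ T, y T * Inc s k T R) * (∑ T', y T' * Inc s k T' R))
    = ∑ R : {R : Finset (Fin s) // R.card = k}, ∑ T, ∑ T',
        (y T * Inc s k T R) * (y T' * Inc s k T' R) from
    Finset.sum_congr rfl fun R _ => by rw [Finset.sum_mul_sum]]
  rw [Finset.sum_comm]
  refine Finset.sum_congr rfl fun T _ => ?_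
  rw [Finset.sum_comm]
  refine Finset.sum_congr rfl fun T' _ => ?_
  rw [Finset.mul_sum]
  exact Finset.sum_congr rfl fun R _ => by ring

lemma key_identity (k : ℕ) (hks : k + 2 ≤ s)
    (y : {T : Finset (Fin s) // T.card = k + 1} → ℝ) :
    (Inc s (k+1) *ᵥ y) ⬝ᵥ (Inc s (k+1) *ᵥ y)
      = (y ᵥ* Inc s k) ⬝ᵥ (y ᵥ* Inc s k) + ((s : ℝ) - 2 * (k + 1)) * (y ⬝ᵥ y) := by
  classical
  rw [expand_mulVec, expand_vecMul]
  rw [show (∑ T, ∑ T', y T * y T' *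
      ∑ S : {S : Finset (Fin s) // S.card = k + 1 + 1}, Inc s (k+1) S T * Inc s (k+1) S T')
    = ∑ T, ∑ T', (y T * y T' *
        ∑ R : {R : Finset (Fin s) // R.card = k}, Inc s k T R * Inc s k T' R
      + y T * y T' * (if T = T' then (s : ℝ) - 2 * (k + 1) else 0)) from
    Finset.sum_congr rfl fun T _ => Finset.sum_congr rfl fun T' _ => by
      rw [pair_count k hks T T', mul_add]]
  rw [Finset.sum_congr rfl fun T (_ : T ∈ univ) => Finset.sum_add_distrib]
  rw [Finset.sum_add_distrib]
  congr 1
  have : ∀ T : {T : Finset (Fin s) // T.card = k + 1},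
      (∑ T', y T * y T' * (if T = T' then (s : ℝ) - 2 * (k + 1) else 0))
        = y T * y T * ((s : ℝ) - 2 * (k + 1)) := by
    intro T
    rw [Finset.sum_eq_single T]
    · simp
    · intro b _ hb
      rw [if_neg (Ne.symm hb), mul_zero]
    · intro h; exact absurd (Finset.mem_univ T) h
  rw [Finset.sum_congr rfl fun T _ => this T]
  rw [dotProduct, ← Finset.sum_mul, mul_comm]

lemma row_sum (k : ℕ) (S : {S : Finset (Fin s) // S.card = k + 1}) :
    ∑ T : {T : Finset (Fin s) // T.card = k}, Inc s k S T = (k + 1 : ℝ) := by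
  classical
  have : ∑ T : {T : Finset (Fin s) // T.card = k}, Inc s k S T
      = ∑ T : {T : Finset (Fin s) // T.card = k}, if T.1 ⊆ S.1 then (1:ℝ) else 0 :=
    Finset.sum_congr rfl fun T _ => rfl
  rw [this, sum_boole_subtype k (fun T => T ⊆ S.1), filter_subsets, Finset.card_powersetCard,
    S.2, Nat.choose_succ_self_right]
  push_cast; ring

lemma sum_vecMul (k : ℕ) (x : {S : Finset (Fin s) // S.card = k + 1} → ℝ) :
    ∑ T, (x ᵥ* Inc s k) T = (k + 1 : ℝ) * ∑ S, x S := by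
  simp only [vecMul, dotProduct]
  rw [Finset.sum_comm]
  rw [Finset.sum_congr rfl fun S (_ : S ∈ univ) => (by rw [← Finset.mul_sum, row_sum k S, mul_comm] :
    (∑ T : {T : Finset (Fin s) // T.card = k}, x S * Inc s k S T) = (k+1:ℝ) * x S)]
  rw [← Finset.mul_sum]

lemma div_trick {t X c : ℝ} (ht : 0 ≤ t) (hX : 0 ≤ X) (hc : 0 ≤ c)
    (key : t^2 ≤ X * (c * t)) : t ≤ c * X := by
  rcases eq_or_lt_of_le ht with h | h
  · rw [← h]; positivity
  · nlinarith

lemma down_bound : ∀ k : ℕ, k + 2 ≤ s → ∀ x : {S : Finset (Fin s) // S.card = k + 1} → ℝ,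
    ∑ S, x S = 0 →
    (x ᵥ* Inc s k) ⬝ᵥ (x ᵥ* Inc s k) ≤ ((k : ℝ) * ((s : ℝ) - k - 1)) * (x ⬝ᵥ x) := by
  intro k
  induction k with
  | zero =>
    intro hs x hx
    have hz : x ᵥ* Inc s 0 = 0 := by
      funext T
      have hT : T.1 = ∅ := Finset.card_eq_zero.mp T.2
      simp only [vecMul, dotProduct, Inc, hT, Finset.empty_subset, if_true, mul_one, Pi.zero_apply]
      exact hx
    rw [hz]
    simp
  | succ k ih =>
    intro hs x hx
    set d := x ᵥ* Inc s (k+1) with hd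
    have hsumd : ∑ T, d T = 0 := by rw [hd, sum_vecMul, hx, mul_zero]
    have hxx : (0:ℝ) ≤ x ⬝ᵥ x := Finset.sum_nonneg fun i _ => mul_self_nonneg _
    have hddnn : (0:ℝ) ≤ d ⬝ᵥ d := Finset.sum_nonneg fun i _ => mul_self_nonneg _
    have hup : (Inc s (k+1) *ᵥ d) ⬝ᵥ (Inc s (k+1) *ᵥ d)
        ≤ (((k:ℝ)+1) * ((s:ℝ) - (k+1) - 1)) * (d ⬝ᵥ d) := by
      rw [key_identity k (by omega) d]
      have h1 := ih (by omega) d hsumd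
      nlinarith [h1]
    have hdd : d ⬝ᵥ d = x ⬝ᵥ (Inc s (k+1) *ᵥ d) := by
      rw [Matrix.dotProduct_mulVec, ← hd]
    have hCS : (d ⬝ᵥ d)^2 ≤ (x ⬝ᵥ x) * ((Inc s (k+1) *ᵥ d) ⬝ᵥ (Inc s (k+1) *ᵥ d)) := by
      rw [hdd]
      have := Finset.sum_mul_sq_le_sq_mul_sq univ x (Inc s (k+1) *ᵥ d)
      simpa [dotProduct, pow_two] using this
    have hc : (0:ℝ) ≤ ((k:ℝ)+1) * ((s:ℝ) - (k+1) - 1) := by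
      have : (k:ℝ) + 3 ≤ (s:ℝ) := by exact_mod_cast hs
      nlinarith
    have key : (d ⬝ᵥ d)^2 ≤ (x ⬝ᵥ x) * ((((k:ℝ)+1) * ((s:ℝ) - (k+1) - 1)) * (d ⬝ᵥ d)) :=
      le_trans hCS (by nlinarith)
    have goal : d ⬝ᵥ d ≤ (((k:ℝ)+1) * ((s:ℝ) - (k+1) - 1)) * (x ⬝ᵥ x) := by
      exact div_trick hddnn hxx hc key
    have hcast : ((↑(k+1):ℝ) * ((s:ℝ) - ↑(k+1) - 1)) * (x ⬝ᵥ x)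
        = (((k:ℝ)+1) * ((s:ℝ) - (k+1) - 1)) * (x ⬝ᵥ x) := by push_cast; ring
    rw [hcast]
    exact goal

section Spectral

variable {α : Type*} [Fintype α] [DecidableEq α]

lemma charpoly_unitary_conj (U : Matrix.unitaryGroup α ℝ) (D : Matrix α α ℝ) :
    ((U : Matrix α α ℝ) * D * star (U : Matrix α α ℝ)).charpoly = D.charpoly := by
  have hUV : (U : Matrix α α ℝ) * star (U : Matrix α α ℝ) = 1 :=
    Matrix.mem_unitaryGroup_iff.mp U.2
  have hVU : star (U : Matrix α α ℝ) * (U : Matrix α α ℝ) = 1 :=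
    Matrix.mem_unitaryGroup_iff'.mp U.2
  set Um : Matrix α α ℝ[X] := (U : Matrix α α ℝ).map C with hUm
  set Vm : Matrix α α ℝ[X] := (star (U : Matrix α α ℝ)).map C with hVm
  have hmap : ∀ (A B : Matrix α α ℝ), (A * B).map (C : ℝ →+* ℝ[X]) = A.map C * B.map C :=
    fun A B => Matrix.map_mul
  have hUVm : Um * Vm = 1 := by
    rw [hUm, hVm, ← hmap, hUV]
    simp
  have hVUm : Vm * Um = 1 := by
    rw [hUm, hVm, ← hmap, hVU]
    simp
  have hcm : Matrix.charmatrix ((U : Matrix α α ℝ) * D * star (U : Matrix α α ℝ))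
      = Um * Matrix.charmatrix D * Vm := by
    unfold Matrix.charmatrix
    rw [mul_sub, sub_mul]
    congr 1
    · -- Um * scalar X * Vm = scalar X
      symm
      rw [Matrix.scalar_apply, ← Matrix.smul_one_eq_diagonal, Matrix.mul_smul, mul_one,
        Matrix.smul_mul, hUVm]
    · simp only [RingHom.mapMatrix_apply]
      rw [← hmap, ← hmap]
  unfold Matrix.charpoly
  rw [hcm, Matrix.det_mul, Matrix.det_mul, mul_comm, ← mul_assoc, ← Matrix.det_mul, hVUm]
  simp

lemma charpoly_diagonal (d : α → ℝ) :
    (Matrix.diagonal d).charpoly = ∏ i, (X - C (d i)) := by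
  have h : Matrix.charmatrix (Matrix.diagonal d) = Matrix.diagonal (fun i => X - C (d i)) := by
    apply Matrix.ext
    intro i j
    by_cases hij : i = j
    · subst hij
      simp [Matrix.charmatrix_apply_eq]
    · rw [Matrix.charmatrix_apply_ne _ _ _ hij, Matrix.diagonal_apply_ne _ hij,
        Matrix.diagonal_apply_ne _ hij, Polynomial.C_0, neg_zero]
  rw [Matrix.charpoly, h, Matrix.det_diagonal]

lemma eigs_eq_eigenvalues {P : Matrix α α ℝ} (hP : P.IsHermitian) :
    eigs P = Multiset.map hP.eigenvalues Finset.univ.val := by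
  unfold eigs
  have h1 : P.charpoly = (Matrix.diagonal hP.eigenvalues).charpoly := by
    conv_lhs => rw [hP.spectral_theorem]
    rw [Unitary.conjStarAlgAut_apply, charpoly_unitary_conj]
    congr 1
  rw [h1, charpoly_diagonal]
  rw [Polynomial.roots_prod _ _ (by
    apply Finset.prod_ne_zero_iff.mpr
    intro i _
    exact X_sub_C_ne_zero _)]
  simp only [Polynomial.roots_X_sub_C]
  rw [Multiset.bind_singleton]

lemma secondEig_le (P : Matrix α α ℝ) (hsym : P.IsHermitian)
    (hcard : 2 ≤ Fintype.card α) (γ : ℝ)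
    (hform : ∀ x : α → ℝ, ∑ i, x i = 0 → x ⬝ᵥ (P *ᵥ x) ≤ γ * (x ⬝ᵥ x)) :
    secondEig P ≤ γ := by
  classical
  -- orthonormal eigenvectors, as plain functions
  have hdot : ∀ i j : α, (⇑(hsym.eigenvectorBasis i) : α → ℝ) ⬝ᵥ ⇑(hsym.eigenvectorBasis j)
      = if i = j then 1 else 0 := by
    intro i j
    have h := orthonormal_iff_ite.mp hsym.eigenvectorBasis.orthonormal i j
    simpa [PiLp.inner_apply, dotProduct, conj_trivial, mul_comm] using h
  -- at most one eigenvalue exceeds γ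
  have hcount : (univ.filter (fun i => γ < hsym.eigenvalues i)).card ≤ 1 := by
    by_contra hgt
    push_neg at hgt
    obtain ⟨i, hi, j, hj, hij⟩ := Finset.one_lt_card.mp hgt
    rw [Finset.mem_filter] at hi hj
    set u : α → ℝ := ⇑(hsym.eigenvectorBasis i) with hu
    set v : α → ℝ := ⇑(hsym.eigenvectorBasis j) with hv
    have hPu : P *ᵥ u = hsym.eigenvalues i • u := hsym.mulVec_eigenvectorBasis i
    have hPv : P *ᵥ v = hsym.eigenvalues j • v := hsym.mulVec_eigenvectorBasis j
    have huu : u ⬝ᵥ u = 1 := by rw [hu, hdot i i, if_pos rfl]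
    have hvv : v ⬝ᵥ v = 1 := by rw [hv, hdot j j, if_pos rfl]
    have huv : u ⬝ᵥ v = 0 := by rw [hu, hv, hdot i j, if_neg hij]
    have hvu : v ⬝ᵥ u = 0 := by rw [hu, hv, hdot j i, if_neg (Ne.symm hij)]
    set a : ℝ := ∑ t, u t with ha
    set b : ℝ := ∑ t, v t with hb
    set x : α → ℝ := b • u - a • v with hx
    have hxsum : ∑ t, x t = 0 := by
      rw [hx]
      simp only [Pi.sub_apply, Pi.smul_apply, smul_eq_mul]
      rw [Finset.sum_sub_distrib, ← Finset.mul_sum, ← Finset.mul_sum, ← ha, ← hb]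
      ring
    have hxx : x ⬝ᵥ x = b^2 + a^2 := by
      rw [hx]
      simp only [sub_dotProduct, dotProduct_sub, smul_dotProduct, dotProduct_smul,
        huu, hvv, huv, hvu, smul_eq_mul]
      ring
    have hxPx : x ⬝ᵥ (P *ᵥ x) = b^2 * hsym.eigenvalues i + a^2 * hsym.eigenvalues j := by
      rw [hx, Matrix.mulVec_sub, Matrix.mulVec_smul, Matrix.mulVec_smul, hPu, hPv]
      simp only [sub_dotProduct, dotProduct_sub, smul_dotProduct, dotProduct_smul,
        huu, hvv, huv, hvu, smul_eq_mul]
      ring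
    have hineq := hform x hxsum
    rw [hxx, hxPx] at hineq
    by_cases hab : a = 0 ∧ b = 0
    · -- then u itself sums to zero
      have h2 := hform u (by rw [← ha]; exact hab.1)
      rw [hPu] at h2
      simp only [dotProduct_smul, smul_eq_mul, huu, mul_one] at h2
      exact absurd h2 (not_le.mpr hi.2)
    · rcases not_and_or.mp hab with h | h
      · have h1 : 0 < a^2 * (hsym.eigenvalues j - γ) :=
          mul_pos (pow_two_pos_of_ne_zero h) (sub_pos.mpr hj.2)
        have h2 : 0 ≤ b^2 * (hsym.eigenvalues i - γ) :=
          mul_nonneg (sq_nonneg b) (sub_pos.mpr hi.2).le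
        nlinarith
      · have h1 : 0 < b^2 * (hsym.eigenvalues i - γ) :=
          mul_pos (pow_two_pos_of_ne_zero h) (sub_pos.mpr hi.2)
        have h2 : 0 ≤ a^2 * (hsym.eigenvalues j - γ) :=
          mul_nonneg (sq_nonneg a) (sub_pos.mpr hj.2).le
        nlinarith
  -- convert to the sorted list of charpoly roots
  set l := sortedEigs P with hl
  have hlen : l.length = Fintype.card α := by
    rw [hl]
    unfold sortedEigs
    rw [Multiset.length_sort, eigs_eq_eigenvalues hsym, Multiset.card_map]
    rfl
  by_contra hgt2
  push_neg at hgt2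
  have h2 : Fintype.card α - 2 < l.length := by omega
  have h1 : Fintype.card α - 1 < l.length := by omega
  have hsorted : l.Pairwise (· ≤ ·) := Multiset.pairwise_sort _ _
  have hsecond : secondEig P = l.get ⟨Fintype.card α - 2, h2⟩ := by
    unfold secondEig
    rw [← hl]
    rw [List.getD_eq_getElem l 0 h2, List.get_eq_getElem]
  have hmono : l.get ⟨Fintype.card α - 2, h2⟩ ≤ l.get ⟨Fintype.card α - 1, h1⟩ := by
    rcases eq_or_lt_of_le (by omega : Fintype.card α - 2 ≤ Fintype.card α - 1) with h | h
    · simp [h]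
    · exact List.pairwise_iff_get.mp hsorted _ _ h
  have hg2 : γ < l.get ⟨Fintype.card α - 2, h2⟩ := hsecond ▸ hgt2
  have hg1 : γ < l.get ⟨Fintype.card α - 1, h1⟩ := lt_of_lt_of_le hg2 hmono
  -- two entries above γ
  have hdrop1 : l.drop (Fintype.card α - 2)
      = l.get ⟨Fintype.card α - 2, h2⟩ :: l.drop (Fintype.card α - 1) := by
    have hn : Fintype.card α - 2 + 1 = Fintype.card α - 1 := by omega
    rw [List.drop_eq_getElem_cons h2, hn, List.get_eq_getElem]
  have hdrop2 : l.drop (Fintype.card α - 1)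
      = l.get ⟨Fintype.card α - 1, h1⟩ :: l.drop (Fintype.card α) := by
    have hn : Fintype.card α - 1 + 1 = Fintype.card α := by omega
    rw [List.drop_eq_getElem_cons h1, hn, List.get_eq_getElem]
  have hdrop3 : l.drop (Fintype.card α) = [] := List.drop_eq_nil_of_le (le_of_eq hlen)
  have hcount2 : 2 ≤ l.countP (fun x => decide (γ < x)) := by
    have hsub : (l.drop (Fintype.card α - 2)).Sublist l := List.drop_sublist _ _
    have := List.Sublist.countP_le (p := fun x => decide (γ < x)) hsub
    rw [hdrop1, hdrop2, hdrop3] at this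
    simp only [List.countP_cons, List.countP_nil, decide_eq_true_eq] at this
    rw [if_pos hg1, if_pos hg2] at this
    omega
  -- but at most one root exceeds γ
  have hcount1 : l.countP (fun x => decide (γ < x)) ≤ 1 := by
    have hml : Multiset.countP (fun x => γ < x) (eigs P) = l.countP (fun x => decide (γ < x)) := by
      rw [hl]
      unfold sortedEigs
      conv_lhs => rw [← Multiset.sort_eq (eigs P) (· ≤ ·)]
      rw [Multiset.coe_countP]
    rw [← hml, eigs_eq_eigenvalues hsym, Multiset.countP_map]
    exact hcount
  omega

end Spectral

end DownUp

open DownUp in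
/-- the down-up walk on (k+1)-subsets of an s-element set has
OneSidedGap at least 1/(k+1). -/
theorem stmt_10 (k s : ℕ) (hs : k + 2 ≤ s)
    (P : Matrix {S : Finset (Fin s) // S.card = k + 1} {S : Finset (Fin s) // S.card = k + 1} ℝ)
    (hP : ∀ S S', P S S' =
      if S = S' then 1 / ((s : ℝ) - k)
      else if (S.1 ∩ S'.1).card = k then 1 / (((k : ℝ) + 1) * ((s : ℝ) - k)) else 0) :
    oneSidedGap P ≥ 1 / ((k : ℝ) + 1) := by
  classical
  have hsk : (2 : ℝ) ≤ (s : ℝ) - k := by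
    have : ((k : ℝ) + 2) ≤ (s : ℝ) := by exact_mod_cast hs
    linarith
  have hskpos : (0 : ℝ) < (s : ℝ) - k := by linarith
  have hk1pos : (0 : ℝ) < (k : ℝ) + 1 := by positivity
  -- symmetry
  have hsymm : ∀ S S', P S' S = P S S' := by
    intro S S'
    by_cases h : S = S'
    · rw [h]
    · rw [hP, hP, if_neg h, if_neg (Ne.symm h), Finset.inter_comm]
  have hherm : P.IsHermitian := by
    ext S S'
    rw [Matrix.conjTranspose_apply, star_trivial]
    exact (hsymm S' S).symm
  -- cardinality at least 2
  have hcard : 2 ≤ Fintype.card {S : Finset (Fin s) // S.card = k + 1} := by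
    rw [Fintype.card_finset_len, Fintype.card_fin]
    calc 2 ≤ k + 2 := by omega
      _ = (k + 2).choose (k + 1) := (Nat.choose_succ_self_right (k+1)).symm
      _ ≤ s.choose (k + 1) := Nat.choose_le_choose _ hs
  -- P as a scaled Gram matrix of the inclusion matrix
  set c : ℝ := 1 / (((k : ℝ) + 1) * ((s : ℝ) - k)) with hc
  have hcpos : 0 < c := by rw [hc]; positivity
  have hgram : ∀ S S', P S S' = c * ((Inc s k * (Inc s k)ᵀ) S S') := by
    intro S S'
    have hent : (Inc s k * (Inc s k)ᵀ) S S' = (((S.1 ∩ S'.1).card).choose k : ℝ) := by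
      rw [Matrix.mul_apply]
      rw [show (∑ T : {T : Finset (Fin s) // T.card = k}, Inc s k S T * (Inc s k)ᵀ T S')
          = ∑ T : {T : Finset (Fin s) // T.card = k},
              if T.1 ⊆ S.1 ∩ S'.1 then (1:ℝ) else 0 from
        Finset.sum_congr rfl fun T _ => by
          rw [Matrix.transpose_apply]
          by_cases h1 : T.1 ⊆ S.1 <;> by_cases h2 : T.1 ⊆ S'.1 <;>
            simp [Inc, h1, h2, Finset.subset_inter_iff]]
      rw [sum_boole_subtype k (fun T => T ⊆ S.1 ∩ S'.1), filter_subsets,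
        Finset.card_powersetCard]
    rw [hent, hP]
    by_cases h : S = S'
    · subst h
      rw [if_pos rfl, Finset.inter_self, S.2, Nat.choose_succ_self_right]
      rw [hc]
      field_simp
      exact (Nat.cast_succ k).symm
    · rw [if_neg h]
      have hlt : (S.1 ∩ S'.1).card < k + 1 := by
        rcases lt_or_eq_of_le (le_trans (Finset.card_le_card Finset.inter_subset_left)
          (le_of_eq S.2)) with h' | h'
        · exact h'
        · exfalso
          have heq : S.1 ∩ S'.1 = S.1 :=
            Finset.eq_of_subset_of_card_le Finset.inter_subset_left (by rw [h', S.2])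
          have hsub : S.1 ⊆ S'.1 := by
            intro a ha
            have : a ∈ S.1 ∩ S'.1 := by rw [heq]; exact ha
            exact (Finset.mem_inter.mp this).2
          exact h (Subtype.ext (Finset.eq_of_subset_of_card_le hsub (by rw [S.2, S'.2])))
      by_cases h2 : (S.1 ∩ S'.1).card = k
      · rw [if_pos h2, h2, Nat.choose_self, hc]
        simp
      · rw [if_neg h2, Nat.choose_eq_zero_of_lt (by omega), Nat.cast_zero, mul_zero]
  -- quadratic form bound
  have hform : ∀ x : {S : Finset (Fin s) // S.card = k + 1} → ℝ,
      ∑ S, x S = 0 → x ⬝ᵥ (P *ᵥ x) ≤ ((k : ℝ) / ((k : ℝ) + 1)) * (x ⬝ᵥ x) := by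
    intro x hx
    have hPeq : P = c • (Inc s k * (Inc s k)ᵀ) := by
      ext S S'
      rw [hgram, Matrix.smul_apply, smul_eq_mul]
    have hquad : x ⬝ᵥ (P *ᵥ x) = c * ((x ᵥ* Inc s k) ⬝ᵥ (x ᵥ* Inc s k)) := by
      rw [hPeq, Matrix.smul_mulVec, dotProduct_smul, smul_eq_mul]
      congr 1
      rw [← Matrix.mulVec_mulVec, Matrix.mulVec_transpose, Matrix.dotProduct_mulVec]
    rw [hquad]
    have hdb := down_bound k hs x hx
    have hxx : (0:ℝ) ≤ x ⬝ᵥ x := Finset.sum_nonneg fun i _ => mul_self_nonneg _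
    calc c * ((x ᵥ* Inc s k) ⬝ᵥ (x ᵥ* Inc s k))
        ≤ c * (((k : ℝ) * ((s : ℝ) - k - 1)) * (x ⬝ᵥ x)) := by
          exact mul_le_mul_of_nonneg_left hdb hcpos.le
      _ ≤ ((k : ℝ) / ((k : ℝ) + 1)) * (x ⬝ᵥ x) := by
          rw [show c * ((k : ℝ) * ((s : ℝ) - k - 1) * (x ⬝ᵥ x))
              = (c * ((k : ℝ) * ((s : ℝ) - k - 1))) * (x ⬝ᵥ x) from by ring]
          apply mul_le_mul_of_nonneg_right _ hxx
          rw [hc, div_mul_eq_mul_div, one_mul, div_le_div_iff₀ (by positivity) hk1pos]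
          have hk0 : (0:ℝ) ≤ (k:ℝ) := Nat.cast_nonneg k
          nlinarith
  have hse := secondEig_le P hherm hcard ((k : ℝ) / ((k : ℝ) + 1)) hform
  have hfin : 1 - (k : ℝ) / ((k : ℝ) + 1) = 1 / ((k : ℝ) + 1) := by
    field_simp
    ring
  unfold oneSidedGap
  rw [ge_iff_le, ← hfin]
  linarith
end

section
/- Fix integers k ≥ 1, s ≥ k+2, T ≥ 1 and reals w_I, w_J > 0, and let R be the inner restriction chain on {0,1}^{k+1} with these parameters. Set D̃ = 2·w_J + T·w_I·(2^{k+1} − 2) and define the probability distribution π on {0,1}^{k+1} by π(x) = w_J/D̃ if x is the all-zeros or all-ones string, and π(x) = T·w_I/D̃ otherwise. Then R is reversible with respect to π, i.e., π(x)·R[x,y] = π(y)·R[y,x] for all x, y; in particular π is a stationary distribution of R: πᵀR = πᵀ. -/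
open Matrix Finset BigOperators Kronecker

/-- Off-diagonal entries of the inner restriction chain on {0,1}^{k+1}. -/
noncomputable def innerROff (k s T : ℕ) (wI wJ : ℝ) :
    (Fin (k + 1) → Bool) → (Fin (k + 1) → Bool) → ℝ := fun x y =>
  if (Finset.univ.filter fun i => x i ≠ y i).card = 1 then
    (if x = (fun _ => false) ∨ x = (fun _ => true) then
        wI / (((T : ℝ) * wI + wJ) * ((k : ℝ) + 1) * ((s : ℝ) - k))
     else if y = (fun _ => false) ∨ y = (fun _ => true) then
        wJ / (((T : ℝ) * wI + wJ) * T * ((k : ℝ) + 1) * ((s : ℝ) - k))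
     else 1 / (2 * ((k : ℝ) + 1) * ((s : ℝ) - k)))
  else 0

/-- The inner restriction chain R on {0,1}^{k+1}: off-diagonal entries given by
`innerROff`, and each diagonal entry is 1 minus the sum of the off-diagonal entries
of its row.  (Note `innerROff k s T wI wJ x x = 0`.) -/
noncomputable def innerR (k s T : ℕ) (wI wJ : ℝ) :
    Matrix (Fin (k + 1) → Bool) (Fin (k + 1) → Bool) ℝ :=
  fun x y =>
    if x = y then 1 - ∑ z, innerROff k s T wI wJ x z
    else innerROff k s T wI wJ x y

/-- the inner restriction chain is reversible with respect to the
distribution giving mass w_J/D̃ to the two constant strings and T·w_I/D̃ to all other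
strings; in particular this distribution is stationary. -/
theorem stmt_13 (k s T : ℕ) (hk : 1 ≤ k) (hs : k + 2 ≤ s) (hT : 1 ≤ T)
    (wI wJ : ℝ) (hwI : 0 < wI) (hwJ : 0 < wJ)
    (Dt : ℝ) (hDt : Dt = 2 * wJ + (T : ℝ) * wI * ((2 : ℝ) ^ (k + 1) - 2))
    (pi : (Fin (k + 1) → Bool) → ℝ)
    (hpi : ∀ x, pi x =
      if x = (fun _ => false) ∨ x = (fun _ => true) then wJ / Dt else (T : ℝ) * wI / Dt) :
    (∀ x y, pi x * innerR k s T wI wJ x y = pi y * innerR k s T wI wJ y x) ∧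
    (∀ y, ∑ x, pi x * innerR k s T wI wJ x y = pi y) :=  by
  have hT0 : (T : ℝ) ≠ 0 := by
    have : 0 < T := by omega
    exact_mod_cast this.ne'
  have hT1 : (1 : ℝ) ≤ (T : ℝ) := by exact_mod_cast hT
  have hD : (T : ℝ) * wI + wJ ≠ 0 := by positivity
  have hk1 : ((k : ℝ) + 1) ≠ 0 := by positivity
  have hsk : ((s : ℝ) - (k : ℝ)) ≠ 0 := by
    have : (k : ℝ) + 2 ≤ (s : ℝ) := by exact_mod_cast hs
    linarith
  have hpow : (4 : ℝ) ≤ (2 : ℝ) ^ (k + 1) := by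
    calc (4 : ℝ) = 2 ^ 2 := by norm_num
    _ ≤ 2 ^ (k + 1) := by
        apply pow_le_pow_right₀ (by norm_num) (by omega)
  have hDtne : Dt ≠ 0 := by
    have : 0 < Dt := by
      rw [hDt]
      have h1 : (0:ℝ) < (T:ℝ) * wI := by positivity
      nlinarith [mul_pos h1 (show (0:ℝ) < (2:ℝ)^(k+1) - 2 by linarith)]
    exact this.ne'
  have hsym : ∀ x y : Fin (k+1) → Bool,
      (Finset.univ.filter fun i => x i ≠ y i) = (Finset.univ.filter fun i => y i ≠ x i) := by
    intro x y
    apply Finset.filter_congr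
    intro i _
    simp [ne_comm]
  have hrev : ∀ x y, pi x * innerR k s T wI wJ x y = pi y * innerR k s T wI wJ y x := by
    intro x y
    by_cases hxy : x = y
    · subst hxy; rfl
    · simp only [innerR, if_neg hxy, if_neg (Ne.symm hxy), innerROff, hsym x y]
      by_cases hc : (Finset.univ.filter fun i => y i ≠ x i).card = 1
      · simp only [if_pos hc, hpi]
        split_ifs with hx hy hy
        · ring
        · field_simp
        · field_simp
        · ring
      · simp [hc]
  refine ⟨hrev, ?_⟩
  intro y
  have hdiag : innerROff k s T wI wJ y y = 0 := by
    simp [innerROff]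
  have hrow : ∑ z, innerR k s T wI wJ y z = 1 := by
    have heach : ∀ z, innerR k s T wI wJ y z =
        innerROff k s T wI wJ y z +
          if y = z then (1 - ∑ w, innerROff k s T wI wJ y w) else 0 := by
      intro z
      by_cases h : y = z
      · subst h; simp [innerR, hdiag]
      · simp [innerR, h]
    rw [Finset.sum_congr rfl (fun z _ => heach z), Finset.sum_add_distrib,
      Finset.sum_ite_eq]
    simp
  calc ∑ x, pi x * innerR k s T wI wJ x y = ∑ x, pi y * innerR k s T wI wJ y x := by
        exact Finset.sum_congr rfl (fun x _ => hrev x y)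
    _ = pi y * ∑ x, innerR k s T wI wJ y x := by rw [Finset.mul_sum]
    _ = pi y := by rw [hrow, mul_one]
end
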